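/- arXiv:2604.12842 — 4 statements merged into one kernel-verified Lean document; each statement's English description precedes it below -/
import Mathlib

section
/- Let N ≥ 1, k a commutative ring, q ∈ k a unit, and let (L⁺, L⁻) be a quantized-enveloping pair over a unital associative k-algebra A. Set ℒ = L⁺ (L⁻)^{-1}, an N×N matrix over A. Then ℒ satisfies the reflection equation R ℒ₁ R₂₁ ℒ₂ = ℒ₂ R ℒ₁ R₂₁ in End(k^N) ⊗ End(k^N) ⊗ A, where R₂₁ = P R P. (This is the defining relation (1.4) of the reflection equation algebra O_h(Mat_N), so the entries of ℒ realize O_h(Mat_N) inside A; this underlies Theorem 4.5 of the paper.) -/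
open Matrix Kronecker

namespace QVA

/-- The matrix unit `e_{ij}` of `End(k^N)`. -/
def eMat (k : Type*) [Semiring k] {N : ℕ} (i j : Fin N) : Matrix (Fin N) (Fin N) k :=
  Matrix.single i j 1

/-- The permutation operator `P = ∑_{i,j} e_{ij} ⊗ e_{ji}` in `End(k^N) ⊗ End(k^N)`. -/
def Pmat (k : Type*) [Semiring k] (N : ℕ) : Matrix (Fin N × Fin N) (Fin N × Fin N) k :=
  ∑ i : Fin N, ∑ j : Fin N, eMat k i j ⊗ₖ eMat k j i

/-- The quantum `R`-matrix of type `gl_N`; `qi` stands for `q⁻¹`. -/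
def Rmat (k : Type*) [Ring k] (N : ℕ) (q qi : k) :
    Matrix (Fin N × Fin N) (Fin N × Fin N) k :=
  q • (∑ i : Fin N, eMat k i i ⊗ₖ eMat k i i)
    + (∑ i : Fin N, ∑ j : Fin N, if i ≠ j then eMat k i i ⊗ₖ eMat k j j else 0)
    + (q - qi) • (∑ i : Fin N, ∑ j : Fin N, if i < j then eMat k i j ⊗ₖ eMat k j i else 0)

/-- The explicit inverse of the quantum `R`-matrix. -/
def RmatInv (k : Type*) [Ring k] (N : ℕ) (q qi : k) :
    Matrix (Fin N × Fin N) (Fin N × Fin N) k :=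
  qi • (∑ i : Fin N, eMat k i i ⊗ₖ eMat k i i)
    + (∑ i : Fin N, ∑ j : Fin N, if i ≠ j then eMat k i i ⊗ₖ eMat k j j else 0)
    - (q - qi) • (∑ i : Fin N, ∑ j : Fin N, if i < j then eMat k i j ⊗ₖ eMat k j i else 0)

/-- Place a one-leg matrix `X` in the tensor leg `a` of the `n`-fold tensor power
`End(k^N)^{⊗ n}` (with entries in `A`), modelled as matrices indexed by `Fin n → Fin N`. -/
def leg1 {A : Type*} [Zero A] {N : ℕ} (n : ℕ) (a : Fin n)
    (X : Matrix (Fin N) (Fin N) A) : Matrix (Fin n → Fin N) (Fin n → Fin N) A :=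
  Matrix.of fun f g => if ∀ c, c ≠ a → f c = g c then X (f a) (g a) else 0

/-- Place a two-leg matrix `X` in the tensor legs `(a, b)`. -/
def leg2 {A : Type*} [Zero A] {N : ℕ} (n : ℕ) (a b : Fin n)
    (X : Matrix (Fin N × Fin N) (Fin N × Fin N) A) :
    Matrix (Fin n → Fin N) (Fin n → Fin N) A :=
  Matrix.of fun f g =>
    if ∀ c, c ≠ a → c ≠ b → f c = g c then X (f a, f b) (g a, g b) else 0

/-- Ordered product of a list of elements (`→∏` when the list is increasing,
`←∏` when it is decreasing). -/
def ordProd {M ι : Type*} [Monoid M] (l : List ι) (f : ι → M) : M := (l.map f).prod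

/-- `(Lp, Lm)` (with `LmInv` a two-sided inverse of `Lm`) is a quantized-enveloping
pair over the unital associative `k`-algebra `A`, i.e. it satisfies the defining
relations (1.2) of the quantized enveloping algebra `U_h(gl_N)`. -/
def IsQEPair (k : Type*) [CommRing k] (N : ℕ) (q qi : k)
    (A : Type*) [Ring A] [Algebra k A]
    (Lp Lm LmInv : Matrix (Fin N) (Fin N) A) : Prop :=
  (∀ i j : Fin N, j < i → Lp i j = 0) ∧
  (∀ i j : Fin N, i < j → Lm i j = 0) ∧
  Lm * LmInv = 1 ∧
  LmInv * Lm = 1 ∧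
  (∀ i : Fin N, Lp i i * Lm i i = Lm i i * Lp i i) ∧
  (leg2 2 0 1 ((Rmat k N q qi).map (algebraMap k A)) * leg1 2 0 Lp * leg1 2 1 Lp
      = leg1 2 1 Lp * leg1 2 0 Lp * leg2 2 0 1 ((Rmat k N q qi).map (algebraMap k A))) ∧
  (leg2 2 0 1 ((Rmat k N q qi).map (algebraMap k A)) * leg1 2 0 Lm * leg1 2 1 Lm
      = leg1 2 1 Lm * leg1 2 0 Lm * leg2 2 0 1 ((Rmat k N q qi).map (algebraMap k A))) ∧
  (leg2 2 0 1 ((Rmat k N q qi).map (algebraMap k A)) * leg1 2 0 Lp * leg1 2 1 Lm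
      = leg1 2 1 Lm * leg1 2 0 Lp * leg2 2 0 1 ((Rmat k N q qi).map (algebraMap k A)))


section Helpers

section P
variable {k : Type*} [Semiring k] {N : ℕ}

lemma Pmat_apply (p q : Fin N × Fin N) :
    Pmat k N p q = if q = Prod.swap p then 1 else 0 := by
  rcases p with ⟨a, b⟩
  rcases q with ⟨c, d⟩
  simp only [Pmat, Matrix.sum_apply, Matrix.kroneckerMap_apply, eMat,
    Matrix.single, Matrix.of_apply, Prod.swap_prod_mk, Prod.mk.injEq]
  rw [Finset.sum_eq_single a]
  · rw [Finset.sum_eq_single c]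
    · by_cases h1 : c = b <;> by_cases h2 : d = a
      · simp [h1, h2]
      · simp [h1, h2, show ¬ a = d from fun h => h2 h.symm]
      · simp [h1, h2]
      · simp [h1, h2]
    · intro j _ hj; simp [hj, Ne.symm hj]
    · simp
  · intro i _ hi; simp [hi, Ne.symm hi]
  · simp

lemma Pmat_apply' (p q : Fin N × Fin N) :
    Pmat k N p q = if p = Prod.swap q then 1 else 0 := by
  rw [Pmat_apply]
  congr 1
  rcases p with ⟨a, b⟩; rcases q with ⟨c, d⟩
  simp [Prod.ext_iff, and_comm, eq_comm]

lemma Pmat_mul (X : Matrix (Fin N × Fin N) (Fin N × Fin N) k) :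
    Pmat k N * X = X.submatrix Prod.swap id := by
  ext p q
  rw [Matrix.mul_apply]
  simp only [Pmat_apply', boole_mul]
  simp only [show ∀ r : Fin N × Fin N, (p = r.swap) = (r = p.swap) from fun r =>
    propext ⟨fun h => by rw [h, Prod.swap_swap], fun h => by rw [h, Prod.swap_swap]⟩]
  rw [Finset.sum_ite_eq']
  simp

lemma mul_Pmat (X : Matrix (Fin N × Fin N) (Fin N × Fin N) k) :
    X * Pmat k N = X.submatrix id Prod.swap := by
  ext p q
  rw [Matrix.mul_apply]
  simp only [Pmat_apply, mul_boole]
  simp only [show ∀ r : Fin N × Fin N, (q = r.swap) = (r = q.swap) from fun r =>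
    propext ⟨fun h => by rw [h, Prod.swap_swap], fun h => by rw [h, Prod.swap_swap]⟩]
  rw [Finset.sum_ite_eq']
  simp

lemma Pmat_conj (X : Matrix (Fin N × Fin N) (Fin N × Fin N) k) :
    Pmat k N * X * Pmat k N = X.submatrix Prod.swap Prod.swap := by
  rw [Pmat_mul, mul_Pmat, Matrix.submatrix_submatrix]
  rfl

end P

section K
variable {A : Type*} [Ring A] {N : ℕ}

lemma kron_one_mul (X Y : Matrix (Fin N) (Fin N) A) :
    (X ⊗ₖ (1 : Matrix (Fin N) (Fin N) A)) * (Y ⊗ₖ 1) = (X * Y) ⊗ₖ 1 := by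
  ext ⟨a, b⟩ ⟨c, d⟩
  simp only [Matrix.mul_apply, Matrix.kroneckerMap_apply, Matrix.one_apply,
    Fintype.sum_prod_type, mul_boole, boole_mul, ite_mul, zero_mul, mul_ite, mul_zero]
  rw [Finset.sum_comm]
  by_cases h : b = d
  · simp [h]
  · simp [h, fun hs : b = d => h hs]

lemma one_mul_kron (X Y : Matrix (Fin N) (Fin N) A) :
    ((1 : Matrix (Fin N) (Fin N) A) ⊗ₖ X) * ((1 : Matrix (Fin N) (Fin N) A) ⊗ₖ Y)
      = (1 : Matrix (Fin N) (Fin N) A) ⊗ₖ (X * Y) := by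
  ext ⟨a, b⟩ ⟨c, d⟩
  simp only [Matrix.mul_apply, Matrix.kroneckerMap_apply, Matrix.one_apply,
    Fintype.sum_prod_type, mul_boole, boole_mul, ite_mul, zero_mul, mul_ite, mul_zero]
  by_cases h : a = c
  · simp [h]
  · simp [h]

lemma swap_kron (X : Matrix (Fin N) (Fin N) A) :
    (X ⊗ₖ (1 : Matrix (Fin N) (Fin N) A)).submatrix Prod.swap Prod.swap
      = (1 : Matrix (Fin N) (Fin N) A) ⊗ₖ X := by
  ext ⟨a, b⟩ ⟨c, d⟩
  simp only [Matrix.submatrix_apply, Prod.swap_prod_mk, Matrix.kroneckerMap_apply,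
    Matrix.one_apply, mul_boole, boole_mul]

lemma swap_kron' (X : Matrix (Fin N) (Fin N) A) :
    ((1 : Matrix (Fin N) (Fin N) A) ⊗ₖ X).submatrix Prod.swap Prod.swap
      = X ⊗ₖ (1 : Matrix (Fin N) (Fin N) A) := by
  ext ⟨a, b⟩ ⟨c, d⟩
  simp only [Matrix.submatrix_apply, Prod.swap_prod_mk, Matrix.kroneckerMap_apply,
    Matrix.one_apply, mul_boole, boole_mul]

/-- The reindexing equivalence `(Fin 2 → Fin N) ≃ Fin N × Fin N`. -/
abbrev eN (N : ℕ) : (Fin 2 → Fin N) ≃ Fin N × Fin N := piFinTwoEquiv fun _ => Fin N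

lemma leg2_eq (X : Matrix (Fin N × Fin N) (Fin N × Fin N) A) :
    leg2 2 0 1 X = X.submatrix (eN N) (eN N) := by
  ext f g
  have hc : ∀ c : Fin 2, c ≠ 0 → c ≠ 1 → f c = g c := by
    intro c h0 h1
    fin_cases c <;> simp_all
  simp only [leg2, Matrix.of_apply, Matrix.submatrix_apply, eN, piFinTwoEquiv_apply]
  rw [if_pos hc]

lemma leg1_zero (X : Matrix (Fin N) (Fin N) A) :
    leg1 2 0 X = (X ⊗ₖ (1 : Matrix (Fin N) (Fin N) A)).submatrix (eN N) (eN N) := by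
  ext f g
  have hc : (∀ c : Fin 2, c ≠ 0 → f c = g c) ↔ f 1 = g 1 := by
    constructor
    · intro h; exact h 1 (by omega)
    · intro h c hc
      have : c = 1 := by omega
      rw [this]; exact h
  simp only [leg1, Matrix.of_apply, Matrix.submatrix_apply, Matrix.kroneckerMap_apply,
    Matrix.one_apply, eN, piFinTwoEquiv_apply, mul_boole]
  by_cases h : f 1 = g 1
  · rw [if_pos (hc.2 h), if_pos h]
  · rw [if_neg (fun hh => h (hc.1 hh)), if_neg h]

lemma leg1_one (X : Matrix (Fin N) (Fin N) A) :
    leg1 2 1 X = ((1 : Matrix (Fin N) (Fin N) A) ⊗ₖ X).submatrix (eN N) (eN N) := by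
  ext f g
  have hc : (∀ c : Fin 2, c ≠ 1 → f c = g c) ↔ f 0 = g 0 := by
    constructor
    · intro h; exact h 0 (by omega)
    · intro h c hc
      have : c = 0 := by omega
      rw [this]; exact h
  simp only [leg1, Matrix.of_apply, Matrix.submatrix_apply, Matrix.kroneckerMap_apply,
    Matrix.one_apply, eN, piFinTwoEquiv_apply, boole_mul]
  by_cases h : f 0 = g 0
  · rw [if_pos (hc.2 h), if_pos h]
  · rw [if_neg (fun hh => h (hc.1 hh)), if_neg h]

omit [Ring A] in
lemma sub_inj {n m : Type*} [Ring A] (e : n ≃ m) {X Y : Matrix m m A}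
    (h : X.submatrix ⇑e ⇑e = Y.submatrix ⇑e ⇑e) : X = Y := by
  ext i j
  have := congrFun (congrFun h (e.symm i)) (e.symm j)
  simpa using this

lemma submatrix_swap_mul3 (X Y Z : Matrix (Fin N × Fin N) (Fin N × Fin N) A) :
    (X * Y * Z).submatrix Prod.swap Prod.swap
      = X.submatrix Prod.swap Prod.swap * Y.submatrix Prod.swap Prod.swap
        * Z.submatrix Prod.swap Prod.swap := by
  symm
  simp only [← Equiv.coe_prodComm, Matrix.submatrix_mul_equiv]

end K

/-- Abstract form of the reflection-equation computation, in any monoid. -/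
theorem reflection_aux {M : Type*} [Monoid M] (R R21 p1 p2 a b a' b' : M)
    (haa' : a * a' = 1) (ha'a : a' * a = 1)
    (hbb' : b * b' = 1) (hb'b : b' * b = 1)
    (h1 : R * p1 * p2 = p2 * p1 * R)
    (h2 : R * a * b = b * a * R)
    (h3 : R * p1 * b = b * p1 * R)
    (h2' : R21 * b * a = a * b * R21)
    (h3' : R21 * p2 * a = a * p2 * R21) :
    R * (p1 * a') * R21 * (p2 * b') = (p2 * b') * R * (p1 * a') * R21 := by
  have Ca : ∀ x, a * (a' * x) = x := fun x => by rw [← mul_assoc, haa', one_mul]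
  have Ca' : ∀ x, a' * (a * x) = x := fun x => by rw [← mul_assoc, ha'a, one_mul]
  have Cb : ∀ x, b * (b' * x) = x := fun x => by rw [← mul_assoc, hbb', one_mul]
  have Cb' : ∀ x, b' * (b * x) = x := fun x => by rw [← mul_assoc, hb'b, one_mul]
  have r1 : ∀ x, R * (p1 * (p2 * x)) = p2 * (p1 * (R * x)) := fun x => by
    have := congrArg (· * x) h1
    simpa [mul_assoc] using this
  have d1 : ∀ x, a' * (R21 * (p2 * x)) = p2 * (R21 * (a' * x)) := fun x => by
    have := congrArg (fun y => a' * (y * (a' * x))) h3'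
    simpa [mul_assoc, Ca, Ca'] using this
  have d2 : ∀ x, b' * (R * (p1 * x)) = p1 * (R * (b' * x)) := fun x => by
    have := congrArg (fun y => b' * (y * (b' * x))) h3
    simpa [mul_assoc, Cb, Cb'] using this
  have e3 : R21 * (a' * b') = b' * (a' * R21) := by
    have := congrArg (fun y => b' * (a' * (y * (a' * b')))) h2'
    simpa [mul_assoc, Ca, Ca', Cb, Cb', hbb', hb'b, haa', ha'a] using this.symm
  have d4 : ∀ x, R * (b' * (a' * x)) = a' * (b' * (R * x)) := fun x => by
    have := congrArg (fun y => a' * (b' * (y * (b' * (a' * x))))) h2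
    simpa [mul_assoc, Ca, Ca', Cb, Cb'] using this.symm
  simp only [mul_assoc]
  rw [d1, r1, e3, d4, d2, d4]

end Helpers

/-- for a quantized-enveloping pair `(L⁺, L⁻)` over a unital
associative `k`-algebra `A`, the matrix `ℒ = L⁺ (L⁻)⁻¹` satisfies the reflection
equation `R ℒ₁ R₂₁ ℒ₂ = ℒ₂ R ℒ₁ R₂₁` in `End(k^N) ⊗ End(k^N) ⊗ A`, i.e. the
entries of `ℒ` realize the reflection equation algebra `O_h(Mat_N)` inside `A`. -/
theorem statement5 (N : ℕ) (hN : 1 ≤ N) (k : Type*) [CommRing k] (q : kˣ)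
    (A : Type*) [Ring A] [Algebra k A]
    (Lp Lm LmInv : Matrix (Fin N) (Fin N) A)
    (hL : IsQEPair k N (q : k) ((q⁻¹ : kˣ) : k) A Lp Lm LmInv) :
    leg2 2 0 1 ((Rmat k N (q : k) ((q⁻¹ : kˣ) : k)).map (algebraMap k A))
        * leg1 2 0 (Lp * LmInv)
        * leg2 2 0 1 ((Pmat k N * Rmat k N (q : k) ((q⁻¹ : kˣ) : k) * Pmat k N).map
            (algebraMap k A))
        * leg1 2 1 (Lp * LmInv)
      = leg1 2 1 (Lp * LmInv)
        * leg2 2 0 1 ((Rmat k N (q : k) ((q⁻¹ : kˣ) : k)).map (algebraMap k A))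
        * leg1 2 0 (Lp * LmInv)
        * leg2 2 0 1 ((Pmat k N * Rmat k N (q : k) ((q⁻¹ : kˣ) : k) * Pmat k N).map
            (algebraMap k A)) := by
  classical
  obtain ⟨-, -, hm1, hm2, -, h6, h7, h8⟩ := hL
  have one1 : ((1 : Matrix (Fin N) (Fin N) A) ⊗ₖ (1 : Matrix (Fin N) (Fin N) A))
      = (1 : Matrix (Fin N × Fin N) (Fin N × Fin N) A) := Matrix.one_kronecker_one
  -- transported RLL relations
  rw [leg2_eq, leg1_zero, leg1_one] at h6 h7 h8
  simp only [Matrix.submatrix_mul_equiv] at h6 h7 h8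
  have H6 := sub_inj (eN N) h6
  have H7 := sub_inj (eN N) h7
  have H8 := sub_inj (eN N) h8
  -- swap-conjugated relations
  have H7s := congrArg
    (fun Z : Matrix (Fin N × Fin N) (Fin N × Fin N) A => Z.submatrix Prod.swap Prod.swap) H7
  have H8s := congrArg
    (fun Z : Matrix (Fin N × Fin N) (Fin N × Fin N) A => Z.submatrix Prod.swap Prod.swap) H8
  simp only [submatrix_swap_mul3, swap_kron, swap_kron'] at H7s H8s
  -- rewrite P R P
  have hPRP : (Pmat k N * Rmat k N (q : k) ((q⁻¹ : kˣ) : k) * Pmat k N).map (algebraMap k A)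
      = ((Rmat k N (q : k) ((q⁻¹ : kˣ) : k)).map (algebraMap k A)).submatrix
          Prod.swap Prod.swap := by
    rw [Pmat_conj]
    rfl
  rw [hPRP]
  rw [leg2_eq, leg2_eq, leg1_zero, leg1_one]
  simp only [Matrix.submatrix_mul_equiv]
  refine congrArg (fun Z : Matrix (Fin N × Fin N) (Fin N × Fin N) A =>
    Z.submatrix (⇑(eN N)) (⇑(eN N))) ?_
  rw [show (Lp * LmInv) ⊗ₖ (1 : Matrix (Fin N) (Fin N) A)
        = (Lp ⊗ₖ 1) * (LmInv ⊗ₖ 1) from (kron_one_mul Lp LmInv).symm,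
      show (1 : Matrix (Fin N) (Fin N) A) ⊗ₖ (Lp * LmInv)
        = ((1 : Matrix (Fin N) (Fin N) A) ⊗ₖ Lp) * (1 ⊗ₖ LmInv) from
        (one_mul_kron Lp LmInv).symm]
  exact reflection_aux _ _ (Lp ⊗ₖ 1) ((1 : Matrix (Fin N) (Fin N) A) ⊗ₖ Lp)
    (Lm ⊗ₖ 1) ((1 : Matrix (Fin N) (Fin N) A) ⊗ₖ Lm)
    (LmInv ⊗ₖ 1) ((1 : Matrix (Fin N) (Fin N) A) ⊗ₖ LmInv)
    (by rw [kron_one_mul, hm1, one1]) (by rw [kron_one_mul, hm2, one1])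
    (by rw [one_mul_kron, hm1, one1]) (by rw [one_mul_kron, hm2, one1])
    H6 H7 H8 H7s H8s


end QVA
end

section
/- Let N ≥ 1, k a commutative ring, q ∈ k a unit, a = q − q^{-1}, and B a unital associative k-algebra. Let M(z) = Σ_{r ≥ −1} M_r z^r be a formal series with coefficients M_r ∈ End(k^N) ⊗ B (powers of z bounded below by −1). Interpret R̄(z₁/z₂) and R̄₂₁(z₁/z₂) by the expansion valid for |z₂| < |z₁|: ι R̄(z₁/z₂) = R − a P Σ_{k≥0} z₁^{-k} z₂^{k} and ι R̄₂₁(z₁/z₂) = R₂₁ − a P Σ_{k≥0} z₁^{-k} z₂^{k}. Suppose that, for all integers p and s, the coefficients of z₁^p z₂^s on the two sides of the spectral reflection equation ι R̄(z₁/z₂) · (z₁ M₁(z₁)) · R₂₁ · (z₂ M₂(z₂)) = (z₂ M₂(z₂)) · R · (z₁ M₁(z₁)) · ι R̄₂₁(z₁/z₂) agree (each such coefficient is a finite sum, since z₁ M₁(z₁) and z₂ M₂(z₂) only involve nonnegative powers). Then the residue coefficient M_{−1} satisfies the constant reflection equation R (M_{−1})₁ R₂₁ (M_{−1})₂ = (M_{−1})₂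 R (M_{−1})₁ R₂₁ in End(k^N) ⊗ End(k^N) ⊗ B. (This is the core computation in the proof of Theorem 4.5 of the paper: a σ-commutative field satisfying condition (4.13) has residues obeying the defining relation of the reflection equation algebra O_h(Mat_N).) -/
open Matrix Kronecker

namespace QVA

lemma leg1_zero_s10 {A : Type*} [Zero A] {N : ℕ} (n : ℕ) (a : Fin n) :
    leg1 (N := N) n a (0 : Matrix (Fin N) (Fin N) A) = 0 := by
  ext f g
  simp [leg1]

/-- core computation in the proof of Theorem 4.5: let
`M(z) = ∑_{r ≥ -1} M_r z^r` be a formal series with coefficients in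
`End(k^N) ⊗ B` (encoded as `M : ℤ → Matrix (Fin N) (Fin N) B` vanishing below
degree `-1`).  If for all integers `p, s` the coefficients of `z₁^p z₂^s` of the
two sides of the spectral reflection equation
`ιR̄(z₁/z₂) (z₁M₁(z₁)) R₂₁ (z₂M₂(z₂)) = (z₂M₂(z₂)) R (z₁M₁(z₁)) ιR̄₂₁(z₁/z₂)`
agree (with `ιR̄(z₁/z₂) = R − (q−q⁻¹) P ∑_{k≥0} z₁^{-k} z₂^k`, the expansion for
`|z₂| < |z₁|`), then the residue coefficient `M₋₁` satisfies the constant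
reflection equation `R (M₋₁)₁ R₂₁ (M₋₁)₂ = (M₋₁)₂ R (M₋₁)₁ R₂₁`. -/
theorem statement10 (N : ℕ) (hN : 1 ≤ N) (k : Type*) [CommRing k] (q : kˣ)
    (B : Type*) [Ring B] [Algebra k B]
    (M : ℤ → Matrix (Fin N) (Fin N) B)
    (hlow : ∀ r : ℤ, r < -1 → M r = 0)
    (h : ∀ p s : ℤ,
      leg2 2 0 1 ((Rmat k N (q : k) ((q⁻¹ : kˣ) : k)).map (algebraMap k B))
          * leg1 2 0 (M (p - 1))
          * leg2 2 0 1 ((Pmat k N * Rmat k N (q : k) ((q⁻¹ : kˣ) : k) * Pmat k N).map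
              (algebraMap k B))
          * leg1 2 1 (M (s - 1))
        - ∑ j ∈ Finset.Icc (0 : ℤ) s,
            algebraMap k B ((q : k) - ((q⁻¹ : kˣ) : k)) •
              (leg2 2 0 1 ((Pmat k N).map (algebraMap k B))
                * leg1 2 0 (M (p + j - 1))
                * leg2 2 0 1 ((Pmat k N * Rmat k N (q : k) ((q⁻¹ : kˣ) : k)
                    * Pmat k N).map (algebraMap k B))
                * leg1 2 1 (M (s - j - 1)))
      = leg1 2 1 (M (s - 1))
          * leg2 2 0 1 ((Rmat k N (q : k) ((q⁻¹ : kˣ) : k)).map (algebraMap k B))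
          * leg1 2 0 (M (p - 1))
          * leg2 2 0 1 ((Pmat k N * Rmat k N (q : k) ((q⁻¹ : kˣ) : k) * Pmat k N).map
              (algebraMap k B))
        - ∑ j ∈ Finset.Icc (0 : ℤ) s,
            algebraMap k B ((q : k) - ((q⁻¹ : kˣ) : k)) •
              (leg1 2 1 (M (s - j - 1))
                * leg2 2 0 1 ((Rmat k N (q : k) ((q⁻¹ : kˣ) : k)).map (algebraMap k B))
                * leg1 2 0 (M (p + j - 1))
                * leg2 2 0 1 ((Pmat k N).map (algebraMap k B)))) :
    leg2 2 0 1 ((Rmat k N (q : k) ((q⁻¹ : kˣ) : k)).map (algebraMap k B))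
        * leg1 2 0 (M (-1))
        * leg2 2 0 1 ((Pmat k N * Rmat k N (q : k) ((q⁻¹ : kˣ) : k) * Pmat k N).map
            (algebraMap k B))
        * leg1 2 1 (M (-1))
      = leg1 2 1 (M (-1))
        * leg2 2 0 1 ((Rmat k N (q : k) ((q⁻¹ : kˣ) : k)).map (algebraMap k B))
        * leg1 2 0 (M (-1))
        * leg2 2 0 1 ((Pmat k N * Rmat k N (q : k) ((q⁻¹ : kˣ) : k) * Pmat k N).map
            (algebraMap k B)) := by
  have hm2 : M (-2) = 0 := hlow _ (by norm_num)
  have h1 := h 0 0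
  have h2 := h (-1) 1
  have hIcc0 : Finset.Icc (0 : ℤ) 0 = {0} := rfl
  have hIcc1 : Finset.Icc (0 : ℤ) 1 = {0, 1} := rfl
  rw [hIcc0] at h1
  rw [hIcc1] at h2
  simp only [Finset.sum_singleton, Finset.sum_insert (by decide : (0:ℤ) ∉ ({1} : Finset ℤ)),
    Finset.sum_singleton] at h1 h2
  norm_num [hm2, leg1_zero_s10] at h1 h2
  have := sub_eq_sub_iff_sub_eq_sub.mp h1
  rw [h2] at this
  rw [sub_self] at this
  simpa [Matrix.map_mul] using sub_eq_zero.mp this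

end QVA
end

section
/- Let N ≥ 1 be an integer. There exists a unique formal power series G ∈ ℂ[[t]] with constant term 1 such that G(t (1 + N t)^{-1}) = (1 − t²) G(t) in ℂ[[t]], where t(1 + N t)^{-1} ∈ t ℂ[[t]] and G(t(1+Nt)^{-1}) denotes formal composition (substitution). Equivalently, writing g(u) = G(u^{-1}) ∈ 1 + u^{-1} ℂ[[u^{-1}]], g is the unique element of 1 + u^{-1} ℂ[[u^{-1}]] satisfying g(u + N) = g(u)(1 − u^{-2}). -/
namespace QVA

/-- Formal composition `G(φ)` of power series: when the constant coefficient of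
`φ` vanishes, `coeff n (G ∘ φ) = ∑_{d ≤ n} (coeff d G) (coeff n (φ^d))`. -/
noncomputable def psComp (G φ : PowerSeries ℂ) : PowerSeries ℂ :=
  PowerSeries.mk fun n =>
    ∑ d ∈ Finset.range (n + 1), PowerSeries.coeff d G * PowerSeries.coeff n (φ ^ d)

open PowerSeries Finset

/-- the unit `u = (1 + N t)⁻¹`. -/
noncomputable def uPS (N : ℕ) : PowerSeries ℂ :=
  ((1 : PowerSeries ℂ) + (N : PowerSeries ℂ) * PowerSeries.X)⁻¹

/-- `φ = t (1 + N t)⁻¹`. -/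
noncomputable def phiPS (N : ℕ) : PowerSeries ℂ := PowerSeries.X * uPS N

/-- the coefficients `c_{n,d} = coeff_n (φ^d)`. -/
noncomputable def cN (N n d : ℕ) : ℂ := PowerSeries.coeff n ((phiPS N) ^ d)

lemma base_const (N : ℕ) :
    PowerSeries.constantCoeff ((1 : PowerSeries ℂ) + (N : PowerSeries ℂ) * PowerSeries.X)
      = 1 := by
  simp

lemma uPS_const (N : ℕ) : PowerSeries.constantCoeff (uPS N) = 1 := by
  rw [uPS, PowerSeries.constantCoeff_inv, base_const, inv_one]

lemma uPS_coeff_one (N : ℕ) : PowerSeries.coeff 1 (uPS N) = -(N : ℂ) := by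
  have h := PowerSeries.mul_inv_cancel
    ((1 : PowerSeries ℂ) + (N : PowerSeries ℂ) * PowerSeries.X) (by rw [base_const]; norm_num)
  have h1 := congrArg (PowerSeries.coeff 1) h
  rw [PowerSeries.coeff_one_mul,
    show ((1 : PowerSeries ℂ) + (N : PowerSeries ℂ) * PowerSeries.X)⁻¹ = uPS N from rfl,
    uPS_const] at h1
  have hb : PowerSeries.coeff 1
      ((1 : PowerSeries ℂ) + (N : PowerSeries ℂ) * PowerSeries.X) = (N : ℂ) := by
    have : ((N : PowerSeries ℂ)) = PowerSeries.C (N : ℂ) := by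
      simp [PowerSeries.C_eq_algebraMap, map_natCast]
    rw [map_add, this, PowerSeries.coeff_C_mul]
    simp
  rw [hb, base_const] at h1
  have h2 : (N : ℂ) * 1 + PowerSeries.coeff 1 (uPS N) * 1 = 0 := by
    simpa using h1
  linear_combination h2

lemma cN_eq (N n d : ℕ) :
    cN N n d = if d ≤ n then PowerSeries.coeff (n - d) ((uPS N) ^ d) else 0 := by
  rw [cN, phiPS, mul_pow, PowerSeries.coeff_X_pow_mul']

lemma cN_diag (N d : ℕ) : cN N d d = 1 := by
  rw [cN_eq, if_pos le_rfl, Nat.sub_self, PowerSeries.coeff_zero_eq_constantCoeff_apply,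
    map_pow, uPS_const, one_pow]

lemma cN_subdiag (N d : ℕ) : cN N (d + 1) d = -((d : ℂ) * N) := by
  rw [cN_eq, if_pos (Nat.le_succ d), show d + 1 - d = 1 from by omega, PowerSeries.coeff_one_pow,
    uPS_coeff_one, uPS_const, one_pow, mul_one]
  ring

/-- the recursively defined coefficient sequence. -/
noncomputable def gseq (N : ℕ) : ℕ → ℂ
  | 0 => 1
  | (k + 1) => (((k : ℂ) + 1) * N)⁻¹ *
      (gseq N k + ∑ d ∈ (Finset.range (k + 1)).attach,
        gseq N d.1 * cN N (k + 2) d.1)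
termination_by n => n
decreasing_by
  · omega
  · have := Finset.mem_range.mp d.2; omega

lemma gseq_zero (N : ℕ) : gseq N 0 = 1 := by rw [gseq]

lemma gseq_succ (N k : ℕ) : gseq N (k + 1) = (((k : ℂ) + 1) * N)⁻¹ *
    (gseq N k + ∑ d ∈ Finset.range (k + 1), gseq N d * cN N (k + 2) d) := by
  rw [gseq, ← Finset.sum_attach (Finset.range (k + 1)) (fun d => gseq N d * cN N (k + 2) d)]

/-- the functional equation, coefficientwise. -/
lemma eq_iff_coeffwise (N : ℕ) (G : PowerSeries ℂ) :
    psComp G (phiPS N) = (1 - PowerSeries.X ^ 2) * G ↔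
      ∀ n, (∑ d ∈ Finset.range (n + 1),
          PowerSeries.coeff d G * cN N n d)
        = PowerSeries.coeff n G
          - (if 2 ≤ n then PowerSeries.coeff (n - 2) G else 0) := by
  constructor
  · intro h n
    have := congrArg (PowerSeries.coeff n) h
    rw [psComp, PowerSeries.coeff_mk, sub_mul, one_mul, map_sub,
      PowerSeries.coeff_X_pow_mul'] at this
    simpa [cN] using this
  · intro h
    ext n
    rw [psComp, PowerSeries.coeff_mk, sub_mul, one_mul, map_sub,
      PowerSeries.coeff_X_pow_mul']
    simpa [cN] using h n

lemma sum_split (N k : ℕ) (g : ℕ → ℂ) :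
    (∑ d ∈ Finset.range (k + 3), g d * cN N (k + 2) d)
      = (∑ d ∈ Finset.range (k + 1), g d * cN N (k + 2) d)
        + g (k + 1) * (-(((k : ℂ) + 1) * N)) + g (k + 2) := by
  rw [Finset.sum_range_succ, Finset.sum_range_succ]
  have h1 : cN N (k + 2) (k + 2) = 1 := cN_diag N (k + 2)
  have h2 : cN N (k + 2) (k + 1) = -(((k : ℂ) + 1) * N) := by
    have := cN_subdiag N (k + 1)
    push_cast at this ⊢
    convert this using 2
  rw [h1, h2, mul_one]

/-- there is a unique formal power series `G ∈ ℂ[[t]]` with constant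
term `1` such that `G(t(1 + Nt)⁻¹) = (1 − t²) G(t)`; equivalently,
`g(u) = G(u⁻¹)` is the unique element of `1 + u⁻¹ℂ[[u⁻¹]]` with
`g(u + N) = g(u)(1 − u⁻²)`. -/
theorem statement13 (N : ℕ) (hN : 1 ≤ N) :
    ∃! G : PowerSeries ℂ,
      PowerSeries.constantCoeff G = 1 ∧
      psComp G (PowerSeries.X * ((1 : PowerSeries ℂ)
          + (N : PowerSeries ℂ) * PowerSeries.X)⁻¹)
        = (1 - PowerSeries.X ^ 2) * G := by
  have hNC : (N : ℂ) ≠ 0 := by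
    exact_mod_cast Nat.cast_ne_zero.mpr (by omega)
  have hdenom : ∀ k : ℕ, ((k : ℂ) + 1) * N ≠ 0 := fun k =>
    mul_ne_zero (Nat.cast_add_one_ne_zero k) hNC
  refine ⟨PowerSeries.mk (gseq N), ⟨?_, ?_⟩, ?_⟩
  · rw [← PowerSeries.coeff_zero_eq_constantCoeff_apply, PowerSeries.coeff_mk, gseq_zero]
  · show psComp _ (phiPS N) = _
    rw [eq_iff_coeffwise]
    intro n
    match n with
    | 0 =>
        simp only [PowerSeries.coeff_mk]
        rw [Finset.sum_range_one, cN_diag, gseq_zero]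
        norm_num
    | 1 =>
        simp only [PowerSeries.coeff_mk]
        rw [Finset.sum_range_succ, Finset.sum_range_one, cN_diag]
        have h10 : cN N 1 0 = 0 := by
          rw [cN_eq]; simp
        rw [h10]
        norm_num
    | (k + 2) =>
        simp only [PowerSeries.coeff_mk]
        rw [show k + 2 + 1 = k + 3 from rfl, sum_split]
        have hg := gseq_succ N k
        have key : gseq N (k + 1) * (((k : ℂ) + 1) * N)
            = gseq N k + ∑ d ∈ Finset.range (k + 1), gseq N d * cN N (k + 2) d := by
          rw [hg]
          field_simp
        have : 2 ≤ k + 2 := by omega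
        rw [if_pos this, show k + 2 - 2 = k from rfl]
        linear_combination -key
  · rintro G' ⟨hc, heq⟩
    have heq' : psComp G' (phiPS N) = (1 - PowerSeries.X ^ 2) * G' := heq
    rw [eq_iff_coeffwise] at heq'
    ext n
    rw [PowerSeries.coeff_mk]
    induction n using Nat.strong_induction_on with
    | _ n ih =>
      match n with
      | 0 =>
          rw [gseq_zero, PowerSeries.coeff_zero_eq_constantCoeff_apply, hc]
      | (k + 1) =>
          have h := heq' (k + 2)
          rw [show k + 2 + 1 = k + 3 from rfl, sum_split, if_pos (by omega : 2 ≤ k + 2),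
            show k + 2 - 2 = k from rfl] at h
          have hrec : PowerSeries.coeff (k + 1) G'
              = (((k : ℂ) + 1) * N)⁻¹ * (PowerSeries.coeff k G'
                + ∑ d ∈ Finset.range (k + 1), PowerSeries.coeff d G' * cN N (k + 2) d) := by
            have h2 : PowerSeries.coeff (k + 1) G' * (((k : ℂ) + 1) * N)
                = PowerSeries.coeff k G'
                  + ∑ d ∈ Finset.range (k + 1), PowerSeries.coeff d G' * cN N (k + 2) d := by
              linear_combination -h
            rw [← h2, mul_comm]
            exact (mul_inv_cancel_right₀ (hdenom k) _).symm
          rw [hrec, gseq_succ]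
          congr 1
          rw [ih k (by omega)]
          congr 1
          apply Finset.sum_congr rfl
          intro d hd
          rw [ih d (Finset.mem_range.mp hd)]

end QVA
end

section
/- Let N ≥ 1 be an integer and let ℂ(q) be the field of rational functions in one variable q over ℂ. There exists a unique sequence (f_r)_{r≥1} of elements of ℂ(q) such that, for every r ≥ 1, the rational function f_r (q − 1)^{-r} is regular at q = 1 (has no pole at q = 1), and the formal power series f_q(z) = 1 + Σ_{r≥1} f_r z^r (1 − z)^{-r} ∈ ℂ(q)[[z]] satisfies the functional equation f_q(z q^{2N}) = f_q(z) (1 − z q²)(1 − z q^{2N−2})(1 − z)^{-1}(1 − z q^{2N})^{-1} in ℂ(q)[[z]]. -/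
namespace QVA

/-- A rational function is regular at `q = 1` if it can be written with a
denominator not vanishing at `q = 1`. -/
def RegularAtOne (x : RatFunc ℂ) : Prop :=
  ∃ a b : Polynomial ℂ, Polynomial.eval 1 b ≠ 0 ∧
    x * algebraMap (Polynomial ℂ) (RatFunc ℂ) b = algebraMap (Polynomial ℂ) (RatFunc ℂ) a


/-- The formal power series `f_q(z) = 1 + ∑_{r ≥ 1} f_r z^r (1 − z)^{-r}`
in `ℂ(q)[[z]]` attached to a sequence `(f_r)_{r ≥ 1}`; the coefficient of `z^n`
only involves `f_1, …, f_n` since `z^r(1 − z)^{-r}` has order `r`. -/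
noncomputable def fqSeries (f : {r : ℕ // 1 ≤ r} → RatFunc ℂ) : PowerSeries (RatFunc ℂ) :=
  PowerSeries.mk fun n =>
    (if n = 0 then 1 else 0)
      + ∑ j ∈ Finset.range n,
          f ⟨j + 1, Nat.succ_le_succ (Nat.zero_le j)⟩
            * PowerSeries.coeff (R := RatFunc ℂ) n
                (PowerSeries.X ^ (j + 1) * ((1 - PowerSeries.X)⁻¹) ^ (j + 1))



noncomputable section
open PowerSeries Finset

local notation "K" => RatFunc ℂ
local notation "aK" => algebraMap (Polynomial ℂ) (RatFunc ℂ)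
local notation "q" => (RatFunc.X : RatFunc ℂ)

lemma aK_inj : Function.Injective (aK) := RatFunc.algebraMap_injective ℂ

instance : CharZero (RatFunc ℂ) := charZero_of_injective_algebraMap aK_inj

lemma aK_X : aK Polynomial.X = q := RatFunc.algebraMap_X

lemma aK_ne_zero {u : Polynomial ℂ} (h : u ≠ 0) : aK u ≠ 0 := by
  intro h0; exact h (aK_inj (by simpa using h0))

lemma aK_ne_zero_of_eval {u : Polynomial ℂ} (h : Polynomial.eval 1 u ≠ 0) : aK u ≠ 0 :=
  aK_ne_zero (by rintro rfl; simp at h)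

lemma q_pow_ne_one {k : ℕ} (hk : k ≠ 0) : (q) ^ k ≠ 1 := by
  intro h
  have h2 : aK (Polynomial.X ^ k) = aK 1 := by
    rw [map_pow, aK_X, map_one, h]
  have h3 : (Polynomial.X : Polynomial ℂ) ^ k = 1 := aK_inj h2
  have h4 := congrArg (Polynomial.eval 0) h3
  simp [zero_pow hk] at h4

lemma q_sub_one_ne : (q) - 1 ≠ 0 := by
  have : aK (Polynomial.X - 1) ≠ 0 := aK_ne_zero (Polynomial.X_sub_C_ne_zero 1)
  simpa [map_sub, aK_X] using this

lemma reg_one : RegularAtOne 1 := ⟨1, 1, by simp⟩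

lemma reg_mul {x y : RatFunc ℂ} (hx : RegularAtOne x) (hy : RegularAtOne y) :
    RegularAtOne (x * y) := by
  obtain ⟨a, b, hb, hab⟩ := hx
  obtain ⟨c, d, hd, hcd⟩ := hy
  refine ⟨a * c, b * d, by simp [hb, hd], ?_⟩
  rw [map_mul, map_mul]
  calc x * y * (aK b * aK d) = (x * aK b) * (y * aK d) := by ring
  _ = aK a * aK c := by rw [hab, hcd]

lemma reg_add {x y : RatFunc ℂ} (hx : RegularAtOne x) (hy : RegularAtOne y) :
    RegularAtOne (x + y) := by
  obtain ⟨a, b, hb, hab⟩ := hx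
  obtain ⟨c, d, hd, hcd⟩ := hy
  refine ⟨a * d + c * b, b * d, by simp [hb, hd], ?_⟩
  rw [map_add, map_mul, map_mul, map_mul]
  calc (x + y) * (aK b * aK d) = (x * aK b) * aK d + (y * aK d) * aK b := by ring
  _ = aK a * aK d + aK c * aK b := by rw [hab, hcd]

lemma reg_sum {s : Finset ℕ} {φ : ℕ → RatFunc ℂ} (h : ∀ i ∈ s, RegularAtOne (φ i)) :
    RegularAtOne (∑ i ∈ s, φ i) := by
  classical
  induction s using Finset.induction_on with
  | empty => simpa using ⟨0, 1, by simp⟩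
  | @insert a s hnot ih =>
    rw [Finset.sum_insert hnot]
    exact reg_add (h a (Finset.mem_insert_self a s))
      (ih fun i hi => h i (Finset.mem_insert_of_mem hi))

lemma reg_div {u v : Polynomial ℂ} (hv : Polynomial.eval 1 v ≠ 0) :
    RegularAtOne (aK u * (aK v)⁻¹) := by
  refine ⟨u, v, hv, ?_⟩
  have h0 : aK v ≠ 0 := aK_ne_zero_of_eval hv
  field_simp

lemma reg_natInv (n : ℕ) (hn : n ≠ 0) : RegularAtOne ((n : RatFunc ℂ))⁻¹ := by
  have h1 : ((n : RatFunc ℂ))⁻¹ = aK 1 * (aK (Polynomial.C (n : ℂ)))⁻¹ := by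
    simp [RatFunc.algebraMap_C]
  rw [h1]
  exact reg_div (by simp [hn])

/-! ### geometric series and the operator Θ = X d/dX -/

def Sgeo (c : RatFunc ℂ) : PowerSeries (RatFunc ℂ) := mk fun n => c ^ n

@[simp] lemma coeff_Sgeo (c : RatFunc ℂ) (n : ℕ) : coeff (R := RatFunc ℂ) n (Sgeo c) = c ^ n :=
  coeff_mk _ _

lemma one_sub_mul_Sgeo (c : RatFunc ℂ) :
    (1 - C (R := RatFunc ℂ) c * X) * Sgeo c = 1 := by
  ext n
  rw [sub_mul, one_mul, mul_assoc]
  cases n with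
  | zero => simp [Sgeo]
  | succ m =>
    rw [map_sub, coeff_Sgeo, coeff_C_mul, coeff_succ_X_mul, coeff_Sgeo]
    simp [pow_succ, mul_comm]

lemma Sgeo_inv (c : RatFunc ℂ) : (1 - C (R := RatFunc ℂ) c * X)⁻¹ = Sgeo c := by
  rw [PowerSeries.inv_eq_iff_mul_eq_one]
  · rw [mul_comm]; exact one_sub_mul_Sgeo c
  · simp

lemma one_sub_X_eq : (1 - X : PowerSeries (RatFunc ℂ)) = 1 - C (R := RatFunc ℂ) 1 * X := by
  rw [map_one, one_mul]

lemma one_sub_X_inv : (1 - X : PowerSeries (RatFunc ℂ))⁻¹ = Sgeo 1 := by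
  rw [one_sub_X_eq, Sgeo_inv]

def Th (F : PowerSeries (RatFunc ℂ)) : PowerSeries (RatFunc ℂ) :=
  mk fun n => (n : RatFunc ℂ) * coeff (R := RatFunc ℂ) n F

@[simp] lemma coeff_Th (F : PowerSeries (RatFunc ℂ)) (n : ℕ) :
    coeff (R := RatFunc ℂ) n (Th F) = (n : RatFunc ℂ) * coeff (R := RatFunc ℂ) n F := coeff_mk _ _

lemma Th_add (F G : PowerSeries (RatFunc ℂ)) : Th (F + G) = Th F + Th G := by
  ext n; simp [mul_add]

lemma Th_sub (F G : PowerSeries (RatFunc ℂ)) : Th (F - G) = Th F - Th G := by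
  ext n; simp [mul_sub]

lemma Th_mul (F G : PowerSeries (RatFunc ℂ)) : Th (F * G) = Th F * G + F * Th G := by
  ext n
  rw [map_add, coeff_Th, coeff_mul, coeff_mul, coeff_mul, Finset.mul_sum, ← Finset.sum_add_distrib]
  apply Finset.sum_congr rfl
  intro p hp
  have hpn : p.1 + p.2 = n := Finset.HasAntidiagonal.mem_antidiagonal.mp hp
  rw [coeff_Th, coeff_Th, ← hpn]
  push_cast
  ring

lemma Th_rescale (c : RatFunc ℂ) (F : PowerSeries (RatFunc ℂ)) :
    Th (rescale c F) = rescale c (Th F) := by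
  ext n; simp [coeff_rescale]; ring

lemma Th_one_sub_mul (c : RatFunc ℂ) :
    Th (1 - C (R := RatFunc ℂ) c * X) = -(C (R := RatFunc ℂ) c * X) := by
  ext n
  rw [coeff_Th, map_sub, map_neg, coeff_C_mul, coeff_one, coeff_X]
  match n with
  | 0 => simp
  | 1 => simp
  | (m+2) => simp

lemma Th_one_sub_X : Th (1 - X : PowerSeries (RatFunc ℂ)) = -X := by
  rw [one_sub_X_eq, Th_one_sub_mul, map_one, one_mul]

/-- Uniqueness for the "ODE" `W · ΘY = Y · R`. -/
lemma ode_unique {W R Y Z : PowerSeries (RatFunc ℂ)}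
    (hW : constantCoeff (R := RatFunc ℂ) W ≠ 0) (hR : constantCoeff (R := RatFunc ℂ) R = 0)
    (h0 : coeff (R := RatFunc ℂ) 0 Y = coeff (R := RatFunc ℂ) 0 Z)
    (hY : W * Th Y = Y * R) (hZ : W * Th Z = Z * R) : Y = Z := by
  have hE : W * Th (Y - Z) = (Y - Z) * R := by
    rw [Th_sub, mul_sub, sub_mul, hY, hZ]
  ext n
  induction n using Nat.strong_induction_on with
  | _ n ih =>
    match n with
    | 0 => exact h0
    | (m+1) =>
      have hEc : ∀ k < m + 1, coeff (R := RatFunc ℂ) k (Y - Z) = 0 := by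
        intro k hk
        rw [map_sub, ih k hk, sub_self]
      have hL : coeff (R := RatFunc ℂ) (m+1) (W * Th (Y - Z))
          = constantCoeff (R := RatFunc ℂ) W * ((m+1 : ℕ) : RatFunc ℂ)
              * coeff (R := RatFunc ℂ) (m+1) (Y - Z) := by
        rw [coeff_mul]
        rw [Finset.sum_eq_single (0, m+1)]
        · rw [coeff_Th, coeff_zero_eq_constantCoeff]; push_cast; ring
        · rintro ⟨i, j⟩ hij hne
          have h1 : i + j = m + 1 := Finset.HasAntidiagonal.mem_antidiagonal.mp hij
          have h2 : j < m + 1 := by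
            rcases Nat.lt_or_ge j (m+1) with h | h
            · exact h
            · exfalso; apply hne
              have hj : j = m + 1 := le_antisymm (by omega) h
              have hi : i = 0 := by omega
              simp [hi, hj]
          rw [coeff_Th, hEc j h2]
          ring
        · intro h; exfalso; exact h (by simp)
      have hRc : coeff (R := RatFunc ℂ) (m+1) ((Y - Z) * R)
          = coeff (R := RatFunc ℂ) (m+1) (Y - Z) * constantCoeff (R := RatFunc ℂ) R := by
        rw [coeff_mul]
        rw [Finset.sum_eq_single (m+1, 0)]
        · rw [coeff_zero_eq_constantCoeff]
        · rintro ⟨i, j⟩ hij hne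
          have h1 : i + j = m + 1 := Finset.HasAntidiagonal.mem_antidiagonal.mp hij
          have h2 : i < m + 1 := by
            rcases Nat.lt_or_ge i (m+1) with h | h
            · exact h
            · exfalso; apply hne
              have hi : i = m + 1 := le_antisymm (by omega) h
              have hj : j = 0 := by omega
              simp [hi, hj]
          rw [hEc i h2, zero_mul]
        · intro h; exfalso; exact h (by simp)
      have := hE
      have hcoeff := congrArg (coeff (R := RatFunc ℂ) (m+1)) hE
      rw [hL, hRc, hR, mul_zero] at hcoeff
      have hne1 : constantCoeff (R := RatFunc ℂ) W * ((m+1 : ℕ) : RatFunc ℂ) ≠ 0 := by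
        apply mul_ne_zero hW
        exact Nat.cast_ne_zero.mpr (by omega)
      have hz : coeff (R := RatFunc ℂ) (m+1) (Y - Z) = 0 := by
        rcases mul_eq_zero.mp hcoeff with h | h
        · exact absurd h hne1
        · exact h
      rw [map_sub] at hz
      exact sub_eq_zero.mp hz

/-! ### the substitution series σ = X/(1-X) and its powers -/

def sigS : PowerSeries (RatFunc ℂ) := X * Sgeo 1

lemma coeff_sigS (n : ℕ) :
    coeff (R := RatFunc ℂ) n sigS = if 1 ≤ n then 1 else 0 := by
  cases n with
  | zero => simp [sigS]
  | succ m => rw [sigS, coeff_succ_X_mul, coeff_Sgeo]; simp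

def kap (n r : ℕ) : RatFunc ℂ := coeff (R := RatFunc ℂ) n (sigS ^ r)

lemma kap_zero (n : ℕ) : kap n 0 = if n = 0 then 1 else 0 := by
  simp [kap, coeff_one]

lemma nat_sum_aux (r : ℕ) (hr : 1 ≤ r) (n : ℕ) :
    ∑ k ∈ Finset.range n, (if r ≤ k then (k-1).choose (r-1) else 0)
      = if r + 1 ≤ n then (n-1).choose r else 0 := by
  induction n with
  | zero => simp
  | succ n ihn =>
    rw [Finset.sum_range_succ, ihn]
    by_cases h1 : r ≤ n
    · by_cases h2 : r + 1 ≤ n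
      · rw [if_pos h1, if_pos h2, if_pos (by omega)]
        have hkey : (n).choose r = (n-1).choose (r-1) + (n-1).choose r := by
          have hr1 : (r-1) + 1 = r := by omega
          have hn1 : n = (n-1) + 1 := by omega
          conv_lhs => rw [hn1, ← hr1]
          rw [Nat.choose_succ_succ]
          have h5 : (r-1).succ = r := by omega
          rw [h5]
        have h3 : n + 1 - 1 = n := by omega
        rw [h3, hkey]
        omega
      · have hnr : n = r := by omega
        rw [if_neg h2, if_pos h1, if_pos (by omega), zero_add, hnr]
        simp [Nat.choose_self]
    · rw [if_neg h1, if_neg (by omega), if_neg (by omega), add_zero]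

lemma kap_ge_one {r : ℕ} (hr : 1 ≤ r) (n : ℕ) :
    kap n r = if r ≤ n then (((n-1).choose (r-1) : ℕ) : RatFunc ℂ) else 0 := by
  induction r, hr using Nat.le_induction generalizing n with
  | base =>
    rw [kap, pow_one, coeff_sigS]
    by_cases h : 1 ≤ n <;> simp [h]
  | succ r hr ih =>
    generalize hgoal : (if r + 1 ≤ n then (((n-1).choose (r+1-1) : ℕ) : RatFunc ℂ) else 0) = RHS
    rw [kap, pow_succ, coeff_mul, Finset.Nat.sum_antidiagonal_eq_sum_range_succ_mk,
      Finset.sum_range_succ]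
    have hlast : coeff (R := RatFunc ℂ) (n - n) sigS = 0 := by
      rw [Nat.sub_self, coeff_sigS]; simp
    rw [hlast, mul_zero, add_zero]
    have hstep : ∀ k ∈ Finset.range n,
        coeff (R := RatFunc ℂ) k (sigS ^ r) * coeff (R := RatFunc ℂ) (n - k) sigS
          = (if r ≤ k then (((k-1).choose (r-1) : ℕ) : RatFunc ℂ) else 0) := by
      intro k hk
      have hk' : k < n := Finset.mem_range.mp hk
      rw [coeff_sigS, if_pos (by omega), mul_one]
      exact ih k
    rw [Finset.sum_congr rfl hstep]
    have hcst := congrArg (fun m : ℕ => (m : RatFunc ℂ)) (nat_sum_aux r hr n)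
    push_cast [apply_ite (fun m : ℕ => (m : RatFunc ℂ))] at hcst
    rw [hcst, ← hgoal]
    have : r + 1 - 1 = r := by omega
    rw [this]

lemma kap_zero_of_lt {n r : ℕ} (h : n < r) : kap n r = 0 := by
  rcases Nat.eq_zero_or_pos r with hr | hr
  · omega
  · rw [kap_ge_one hr, if_neg (by omega)]

lemma kap_self (n : ℕ) : kap n n = 1 := by
  cases n with
  | zero => rw [kap_zero]; simp
  | succ m =>
    rw [kap_ge_one (by omega), if_pos le_rfl]
    simp [Nat.choose_self]

lemma kap_identity (n r : ℕ) :
    (r : RatFunc ℂ) * (kap n r + kap n (r+1)) = (n : RatFunc ℂ) * kap n r := by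
  rcases Nat.eq_zero_or_pos r with hr | hr
  · subst hr
    rw [kap_zero]
    cases n <;> simp
  · by_cases h1 : r ≤ n
    · by_cases h2 : r + 1 ≤ n
      · rw [kap_ge_one hr, kap_ge_one (by omega), if_pos h1, if_pos h2]
        have h3 : r + 1 - 1 = r := by omega
        rw [h3]
        have hkey : r * ((n-1).choose (r-1) + (n-1).choose r) = n * ((n-1).choose (r-1)) := by
          obtain ⟨m, rfl⟩ : ∃ m, n = m + 1 := ⟨n - 1, by omega⟩
          obtain ⟨s, rfl⟩ : ∃ s, r = s + 1 := ⟨r - 1, by omega⟩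
          simp only [Nat.add_sub_cancel]
          have h6 : (m+1) * Nat.choose m s = (Nat.choose m s + Nat.choose m (s+1)) * (s+1) := by
            rw [← Nat.choose_succ_succ]
            exact Nat.add_one_mul_choose_eq m s
          rw [h6, Nat.mul_comm]
        exact_mod_cast hkey
      · have hrn : r = n := by omega
        subst hrn
        rw [kap_self, kap_zero_of_lt (by omega)]
        ring
    · rw [kap_ge_one hr, kap_ge_one (by omega), if_neg h1, if_neg (by omega)]
      ring

/-! ### the substitution operator -/

def SubS (Φ : PowerSeries (RatFunc ℂ)) : PowerSeries (RatFunc ℂ) :=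
  mk fun n => ∑ r ∈ Finset.range (n+1), coeff (R := RatFunc ℂ) r Φ * kap n r

lemma coeff_SubS (Φ : PowerSeries (RatFunc ℂ)) (n : ℕ) :
    coeff (R := RatFunc ℂ) n (SubS Φ) = ∑ r ∈ Finset.range (n+1), coeff (R := RatFunc ℂ) r Φ * kap n r :=
  coeff_mk _ _

lemma coeff_SubS_ext (Φ : PowerSeries (RatFunc ℂ)) {n m : ℕ} (h : n + 1 ≤ m) :
    coeff (R := RatFunc ℂ) n (SubS Φ) = ∑ r ∈ Finset.range m, coeff (R := RatFunc ℂ) r Φ * kap n r := by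
  rw [coeff_SubS]
  apply Finset.sum_subset (Finset.range_subset_range.mpr h)
  intro x hx hxn
  have : n < x := by
    simp only [Finset.mem_range] at hx hxn
    omega
  rw [kap_zero_of_lt this, mul_zero]

lemma sum_triangle_eq {n : ℕ} (H : ℕ × ℕ → RatFunc ℂ) (hH : ∀ p : ℕ × ℕ, n < p.1 + p.2 → H p = 0) :
    ∑ r ∈ Finset.range (n+1), ∑ p ∈ Finset.HasAntidiagonal.antidiagonal r, H p
      = ∑ a ∈ Finset.range (n+1), ∑ b ∈ Finset.range (n+1), H (a, b) := by
  classical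
  rw [← Finset.sum_biUnion]
  · rw [← Finset.sum_product']
    apply Finset.sum_subset
    · intro p hp
      simp only [Finset.mem_biUnion, Finset.mem_range] at hp
      obtain ⟨r, hr, hpr⟩ := hp
      have := Finset.HasAntidiagonal.mem_antidiagonal.mp hpr
      simp only [Finset.mem_product, Finset.mem_range]
      omega
    · intro p hp hnp
      apply hH
      by_contra hle
      push_neg at hle
      apply hnp
      simp only [Finset.mem_biUnion, Finset.mem_range]
      exact ⟨p.1 + p.2, by omega, Finset.HasAntidiagonal.mem_antidiagonal.mpr rfl⟩
  · intro r hr s hs hrs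
    simp only [Finset.disjoint_left]
    intro p hp hps
    exact hrs (by rw [← Finset.HasAntidiagonal.mem_antidiagonal.mp hp, ← Finset.HasAntidiagonal.mem_antidiagonal.mp hps])

lemma SubS_mul (Φ Ψ : PowerSeries (RatFunc ℂ)) : SubS (Φ * Ψ) = SubS Φ * SubS Ψ := by
  ext n
  rw [coeff_mul]
  have hrhs : ∀ p : ℕ × ℕ, p ∈ Finset.HasAntidiagonal.antidiagonal n →
      coeff (R := RatFunc ℂ) p.1 (SubS Φ) * coeff (R := RatFunc ℂ) p.2 (SubS Ψ)
        = ∑ a ∈ Finset.range (n+1), ∑ b ∈ Finset.range (n+1),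
            coeff (R := RatFunc ℂ) a Φ * coeff (R := RatFunc ℂ) b Ψ * (kap p.1 a * kap p.2 b) := by
    intro p hp
    have hpn := Finset.HasAntidiagonal.mem_antidiagonal.mp hp
    rw [coeff_SubS_ext Φ (m := n+1) (by omega), coeff_SubS_ext Ψ (m := n+1) (by omega),
      Finset.sum_mul_sum]
    apply Finset.sum_congr rfl; intro a _; apply Finset.sum_congr rfl; intro b _
    ring
  rw [Finset.sum_congr rfl hrhs, Finset.sum_comm]
  have hswap : ∀ a, ∑ p ∈ Finset.HasAntidiagonal.antidiagonal n, ∑ b ∈ Finset.range (n+1),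
      coeff (R := RatFunc ℂ) a Φ * coeff (R := RatFunc ℂ) b Ψ * (kap p.1 a * kap p.2 b)
      = ∑ b ∈ Finset.range (n+1), coeff (R := RatFunc ℂ) a Φ * coeff (R := RatFunc ℂ) b Ψ * kap n (a+b) := by
    intro a
    rw [Finset.sum_comm]
    apply Finset.sum_congr rfl
    intro b _
    rw [← Finset.mul_sum]
    congr 1
    have : ∑ p ∈ Finset.HasAntidiagonal.antidiagonal n, kap p.1 a * kap p.2 b
        = coeff (R := RatFunc ℂ) n (sigS ^ a * sigS ^ b) := (coeff_mul _ _ _).symm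
    rw [this, ← pow_add, ← kap]
  rw [Finset.sum_congr rfl (fun a _ => hswap a)]
  -- now LHS
  rw [coeff_SubS]
  have hlhs : ∀ r ∈ Finset.range (n+1),
      coeff (R := RatFunc ℂ) r (Φ * Ψ) * kap n r
        = ∑ p ∈ Finset.HasAntidiagonal.antidiagonal r,
            coeff (R := RatFunc ℂ) p.1 Φ * coeff (R := RatFunc ℂ) p.2 Ψ * kap n (p.1 + p.2) := by
    intro r _
    rw [coeff_mul, Finset.sum_mul]
    apply Finset.sum_congr rfl
    intro p hp
    rw [Finset.HasAntidiagonal.mem_antidiagonal.mp hp]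
  rw [Finset.sum_congr rfl hlhs]
  exact sum_triangle_eq _ (fun p hp => by rw [kap_zero_of_lt hp, mul_zero])

lemma Th_SubS (Φ : PowerSeries (RatFunc ℂ)) :
    Th (SubS Φ) = SubS ((1 + X) * Th Φ) := by
  ext n
  rw [coeff_Th, coeff_SubS, coeff_SubS, Finset.mul_sum]
  have hc : ∀ t : ℕ, coeff (R := RatFunc ℂ) t ((1 + X) * Th Φ)
      = (t : RatFunc ℂ) * coeff (R := RatFunc ℂ) t Φ
        + (match t with
           | 0 => 0
           | (s+1) => (s : RatFunc ℂ) * coeff (R := RatFunc ℂ) s Φ) := by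
    intro t
    rw [add_mul, one_mul, map_add, coeff_Th]
    congr 1
    match t with
    | 0 => simp [coeff_zero_eq_constantCoeff]
    | (s+1) => rw [coeff_succ_X_mul, coeff_Th]
  have hr1 : ∀ t ∈ Finset.range (n+1),
      coeff (R := RatFunc ℂ) t ((1 + X) * Th Φ) * kap n t
        = (t : RatFunc ℂ) * coeff (R := RatFunc ℂ) t Φ * kap n t
          + (match t with
             | 0 => (0 : RatFunc ℂ)
             | (s+1) => (s : RatFunc ℂ) * coeff (R := RatFunc ℂ) s Φ) * kap n t :=
    fun t _ => by rw [hc t, add_mul]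
  rw [Finset.sum_congr rfl hr1, Finset.sum_add_distrib]
  have h2 : ∑ t ∈ Finset.range (n+1),
      (match t with
       | 0 => (0 : RatFunc ℂ)
       | (s+1) => (s : RatFunc ℂ) * coeff (R := RatFunc ℂ) s Φ) * kap n t
      = ∑ s ∈ Finset.range (n+1), (s : RatFunc ℂ) * coeff (R := RatFunc ℂ) s Φ * kap n (s+1) := by
    rw [Finset.sum_range_succ' (fun t => (match t with
       | 0 => (0 : RatFunc ℂ)
       | (s+1) => (s : RatFunc ℂ) * coeff (R := RatFunc ℂ) s Φ) * kap n t) n]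
    simp only [zero_mul, add_zero]
    rw [Finset.sum_range_succ]
    rw [kap_zero_of_lt (by omega), mul_zero, add_zero]
  rw [h2, ← Finset.sum_add_distrib]
  apply Finset.sum_congr rfl
  intro r _
  have := kap_identity n r
  calc (n : RatFunc ℂ) * (coeff (R := RatFunc ℂ) r Φ * kap n r)
      = coeff (R := RatFunc ℂ) r Φ * ((r : RatFunc ℂ) * (kap n r + kap n (r+1))) := by
        rw [kap_identity]; ring
    _ = (r : RatFunc ℂ) * coeff (R := RatFunc ℂ) r Φ * kap n r
        + (r : RatFunc ℂ) * coeff (R := RatFunc ℂ) r Φ * kap n (r+1) := by ring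

/-! ### finite differences of rational expressions in `q^m`, regular at `q = 1` -/

local notation "T" => Polynomial (Polynomial ℂ)

def tauT : T →+* T :=
  Polynomial.eval₂RingHom (Polynomial.C) (Polynomial.C Polynomial.X * Polynomial.X)

def EvT (m : ℕ) : T →+* Polynomial ℂ :=
  Polynomial.eval₂RingHom (RingHom.id _) (Polynomial.X ^ m)

def epsT : T →+* ℂ :=
  Polynomial.eval₂RingHom (Polynomial.evalRingHom 1) 1

lemma EvT_succ (m : ℕ) (P : T) : EvT (m+1) P = EvT m (tauT P) := by
  have h : (EvT (m+1)) = (EvT m).comp tauT := by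
    apply Polynomial.ringHom_ext
    · intro a
      simp [EvT, tauT]
    · simp only [EvT, tauT, RingHom.comp_apply, Polynomial.coe_eval₂RingHom,
        Polynomial.eval₂_X, Polynomial.eval₂_mul, Polynomial.eval₂_C, RingHom.id_apply]
      ring
  rw [h]; rfl

lemma eps_tau (P : T) : epsT (tauT P) = epsT P := by
  have h : epsT.comp tauT = epsT := by
    apply Polynomial.ringHom_ext
    · intro a
      simp [epsT, tauT]
    · simp [epsT, tauT]
  calc epsT (tauT P) = (epsT.comp tauT) P := rfl
  _ = epsT P := by rw [h]

lemma eval_one_EvT (m : ℕ) (P : T) : Polynomial.eval 1 (EvT m P) = epsT P := by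
  have h : (Polynomial.evalRingHom (1:ℂ)).comp (EvT m) = epsT := by
    apply Polynomial.ringHom_ext
    · intro a
      simp [EvT, epsT]
    · simp [EvT, epsT]
  calc Polynomial.eval 1 (EvT m P) = ((Polynomial.evalRingHom (1:ℂ)).comp (EvT m)) P := rfl
  _ = epsT P := by rw [h]

def seqT (u v : T) : ℕ → RatFunc ℂ := fun m => aK (EvT m u) * (aK (EvT m v))⁻¹

lemma seqT_denom_ne {v : T} (hv : epsT v ≠ 0) (m : ℕ) : aK (EvT m v) ≠ 0 :=
  aK_ne_zero_of_eval (by rw [eval_one_EvT]; exact hv)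

lemma diff_step (u v : T) (hv : epsT v ≠ 0) :
    ∃ w : T, ∀ m, fwdDiff 1 (seqT u v) m = ((q) - 1) * seqT w (tauT v * v) m := by
  have hdvd : Polynomial.C (Polynomial.X - 1) ∣ (tauT u * v - u * tauT v) := by
    rw [Polynomial.C_dvd_iff_dvd_coeff]
    intro i
    have h1 : (Polynomial.X - 1 : Polynomial ℂ) = Polynomial.X - Polynomial.C 1 := by
      rw [map_one]
    rw [h1, Polynomial.dvd_iff_isRoot]
    have hmap : Polynomial.map (Polynomial.evalRingHom (1:ℂ)) (tauT u * v - u * tauT v) = 0 := by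
      have hπτ : ∀ P : T, Polynomial.map (Polynomial.evalRingHom (1:ℂ)) (tauT P)
          = Polynomial.map (Polynomial.evalRingHom (1:ℂ)) P := by
        intro P
        have h : (Polynomial.mapRingHom (Polynomial.evalRingHom (1:ℂ))).comp tauT
            = Polynomial.mapRingHom (Polynomial.evalRingHom (1:ℂ)) := by
          apply Polynomial.ringHom_ext
          · intro a; simp [tauT]
          · simp [tauT]
        calc Polynomial.map (Polynomial.evalRingHom (1:ℂ)) (tauT P)
            = ((Polynomial.mapRingHom (Polynomial.evalRingHom (1:ℂ))).comp tauT) P := rfl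
        _ = _ := by rw [h]; rfl
      rw [Polynomial.map_sub, Polynomial.map_mul, Polynomial.map_mul, hπτ u, hπτ v]
      ring
    have := congrArg (fun P => Polynomial.coeff P i) hmap
    simp only [Polynomial.coeff_map, Polynomial.coeff_zero] at this
    exact this
  obtain ⟨w, hw⟩ := hdvd
  refine ⟨w, fun m => ?_⟩
  have hB : aK (EvT m v) ≠ 0 := seqT_denom_ne hv m
  have hB' : aK (EvT (m+1) v) ≠ 0 := seqT_denom_ne hv (m+1)
  have h3 : aK (EvT m (Polynomial.C (Polynomial.X - 1))) = (q) - 1 := by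
    have : EvT m (Polynomial.C (Polynomial.X - 1)) = Polynomial.X - 1 := by
      simp [EvT]
    rw [this, map_sub, aK_X, map_one]
  have h2 : aK (EvT m (tauT u * v - u * tauT v)) = ((q) - 1) * aK (EvT m w) := by
    rw [hw, map_mul, map_mul, h3]
  have h4 : aK (EvT m (tauT u * v - u * tauT v))
      = aK (EvT (m+1) u) * aK (EvT m v) - aK (EvT m u) * aK (EvT (m+1) v) := by
    simp only [map_sub, map_mul]
    rw [EvT_succ m u, EvT_succ m v]
  have hnum : aK (EvT (m+1) u) * aK (EvT m v) - aK (EvT m u) * aK (EvT (m+1) v)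
      = ((q) - 1) * aK (EvT m w) := h4.symm.trans h2
  have hden : aK (EvT m (tauT v * v)) = aK (EvT (m+1) v) * aK (EvT m v) := by
    rw [map_mul, map_mul, EvT_succ m v]
  show seqT u v (m+1) - seqT u v m = _
  rw [seqT, seqT, seqT, hden]
  field_simp
  linear_combination hnum

lemma iter_mul (c : RatFunc ℂ) (g : ℕ → RatFunc ℂ) (n : ℕ) :
    (fwdDiff 1)^[n] (fun m => c * g m) = fun m => c * ((fwdDiff 1)^[n] g) m := by
  induction n generalizing g with
  | zero => simp
  | succ n ihn =>
    rw [Function.iterate_succ_apply, Function.iterate_succ_apply]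
    have h1 : fwdDiff 1 (fun m => c * g m) = fun m => c * (fwdDiff 1 g) m := by
      funext m
      show c * g (m+1) - c * g m = c * (g (m+1) - g m)
      ring
    rw [h1, ihn (fwdDiff 1 g)]

lemma diff_iter (n : ℕ) : ∀ (u v : T), epsT v ≠ 0 →
    ∃ u' v' : T, epsT v' ≠ 0 ∧
      (fwdDiff 1)^[n] (seqT u v) 0 = ((q) - 1) ^ n * seqT u' v' 0 := by
  induction n with
  | zero => exact fun u v hv => ⟨u, v, hv, by simp⟩
  | succ n ihn =>
    intro u v hv
    obtain ⟨w, hw⟩ := diff_step u v hv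
    have hvv : epsT (tauT v * v) ≠ 0 := by
      rw [map_mul, eps_tau]
      exact mul_ne_zero hv hv
    obtain ⟨u', v', hv', hval⟩ := ihn w (tauT v * v) hvv
    refine ⟨u', v', hv', ?_⟩
    rw [Function.iterate_succ_apply]
    have hD : fwdDiff 1 (seqT u v) = fun m => ((q) - 1) * seqT w (tauT v * v) m := by
      funext m
      exact hw m
    rw [hD, iter_mul]
    simp only [hval, pow_succ]
    ring

/-! ### the concrete data -/

variable (N : ℕ)

def uG : T := Polynomial.X ^ (2*N-2) - 1

def vG : T := ∑ i ∈ Finset.range N, Polynomial.X ^ (2*i)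

lemma eps_vG : epsT (vG N) = (N : ℂ) := by
  rw [vG, map_sum]
  have : ∀ i ∈ Finset.range N, epsT (Polynomial.X ^ (2*i)) = 1 := by
    intro i _
    rw [map_pow]
    have : epsT Polynomial.X = 1 := by simp [epsT]
    rw [this, one_pow]
  rw [Finset.sum_congr rfl this]
  simp

lemma eps_vG_ne (hN : 1 ≤ N) : epsT (vG N) ≠ 0 := by
  rw [eps_vG]
  exact_mod_cast Nat.cast_ne_zero.mpr (by omega)

def gamq : ℕ → RatFunc ℂ := seqT (uG N) (vG N)

def delq : ℕ → RatFunc ℂ := fun n => (fwdDiff 1)^[n] (gamq N) 0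

lemma EvT_uG (m : ℕ) : EvT m (uG N) = Polynomial.X ^ (m * (2*N-2)) - 1 := by
  rw [uG, map_sub, map_one, map_pow]
  have : EvT m Polynomial.X = Polynomial.X ^ m := by simp [EvT]
  rw [this, ← pow_mul]

lemma gamq_zero : gamq N 0 = 0 := by
  rw [gamq, seqT, EvT_uG]
  simp

lemma delq_zero : delq N 0 = 0 := by
  rw [delq, Function.iterate_zero_apply, gamq_zero]

lemma delq_reg (n : ℕ) (hN : 1 ≤ N) :
    ∃ ρ : RatFunc ℂ, RegularAtOne ρ ∧ delq N n = ((q) - 1) ^ n * ρ := by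
  obtain ⟨u', v', hv', hval⟩ := diff_iter n (uG N) (vG N) (eps_vG_ne N hN)
  refine ⟨seqT u' v' 0, ?_, ?_⟩
  · rw [seqT]
    exact reg_div (by rw [eval_one_EvT]; exact hv')
  · rw [delq]; exact hval

lemma delq_sum (n : ℕ) :
    delq N n = ∑ m ∈ Finset.range (n+1),
      ((-1 : RatFunc ℂ)) ^ (n - m) * ((n.choose m : ℕ) : RatFunc ℂ) * gamq N m := by
  rw [delq, fwdDiff_iter_eq_sum_shift]
  apply Finset.sum_congr rfl
  intro m _
  have h0 : (0 + m • (1:ℕ)) = m := by simp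
  rw [h0, zsmul_eq_mul]
  push_cast
  ring

/-! ### the four parameters -/

def aQ : RatFunc ℂ := (q) ^ 2
def bQ : RatFunc ℂ := (q) ^ (2*N-2)
def pQ : RatFunc ℂ := (q) ^ (2*N)

lemma aK_EvT_vG (m : ℕ) :
    aK (EvT m (vG N)) = ∑ i ∈ Finset.range N, ((q) ^ (2*m)) ^ i := by
  rw [vG, map_sum, map_sum]
  apply Finset.sum_congr rfl
  intro i _
  rw [map_pow]
  have h1 : EvT m Polynomial.X = Polynomial.X ^ m := by simp [EvT]
  rw [h1, ← pow_mul, map_pow, aK_X]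
  rw [show m * (2*i) = 2*m*i from by ring, pow_mul]

lemma aK_EvT_vG_ne (hN : 1 ≤ N) (m : ℕ) : aK (EvT m (vG N)) ≠ 0 :=
  seqT_denom_ne (eps_vG_ne N hN) m

lemma key_gamq (hN : 1 ≤ N) (m : ℕ) :
    (pQ N ^ m - 1) * gamq N m = (1 - aQ ^ m) * (1 - bQ N ^ m) := by
  have hV := aK_EvT_vG N m
  have hVne := aK_EvT_vG_ne N hN m
  have hgeom : pQ N ^ m - 1 = ((q) ^ (2*m) - 1) * aK (EvT m (vG N)) := by
    rw [hV]
    have := geom_sum_mul ((q) ^ (2*m)) N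
    rw [mul_comm] at this
    rw [this, ← pow_mul, pQ, ← pow_mul]
    congr 2
    ring
  have huG : aK (EvT m (uG N)) = (q) ^ ((2*N-2) * m) - 1 := by
    rw [EvT_uG, map_sub, map_one, map_pow, aK_X, mul_comm]
  rw [gamq, seqT, hgeom, huG]
  have haQ : aQ ^ m = (q) ^ (2*m) := by rw [aQ, ← pow_mul]
  have hbQ : bQ N ^ m = (q) ^ ((2*N-2) * m) := by rw [bQ, ← pow_mul]
  rw [haQ, hbQ]
  field_simp
  ring

/-! ### the solution sequence -/

def fh : ℕ → RatFunc ℂ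
  | 0 => 1
  | (n+1) => (((n+1 : ℕ) : RatFunc ℂ))⁻¹ *
      ∑ k ∈ (Finset.range (n+1)).attach, fh k.1 * delq N ((n+1) - k.1)
  decreasing_by exact Finset.mem_range.mp k.2

lemma fh_zero : fh N 0 = 1 := by rw [fh]

lemma fh_succ (n : ℕ) : fh N (n+1) = (((n+1 : ℕ) : RatFunc ℂ))⁻¹ *
    ∑ k ∈ Finset.range (n+1), fh N k * delq N ((n+1) - k) := by
  rw [fh]
  congr 1
  exact Finset.sum_attach (Finset.range (n+1)) (fun k => fh N k * delq N ((n+1) - k))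

lemma fh_ode (n : ℕ) : ((n : ℕ) : RatFunc ℂ) * fh N n
    = ∑ k ∈ Finset.range n, fh N k * delq N (n - k) := by
  cases n with
  | zero => simp
  | succ m =>
    rw [fh_succ, ← mul_assoc,
      mul_inv_cancel₀ (Nat.cast_ne_zero.mpr (Nat.succ_ne_zero m)), one_mul]

def PhiS : PowerSeries (RatFunc ℂ) := mk (fh N)
def DS : PowerSeries (RatFunc ℂ) := mk (delq N)
def LS : PowerSeries (RatFunc ℂ) := mk (gamq N)
def GS : PowerSeries (RatFunc ℂ) := SubS (PhiS N)

lemma ode_u : Th (PhiS N) = PhiS N * DS N := by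
  ext n
  rw [coeff_Th, coeff_mul, Finset.Nat.sum_antidiagonal_eq_sum_range_succ_mk,
    Finset.sum_range_succ]
  simp only [PhiS, DS, coeff_mk]
  rw [Nat.sub_self, delq_zero, mul_zero, add_zero, fh_ode]

/-! ### orthogonality -/

lemma alt_sum_K (n : ℕ) :
    ∑ i ∈ Finset.range (n+1), (-1 : RatFunc ℂ)^i * ((n.choose i : ℕ) : RatFunc ℂ)
      = if n = 0 then 1 else 0 := by
  have h := Int.alternating_sum_range_choose (n := n)
  have h2 := congrArg (fun z : ℤ => (z : RatFunc ℂ)) h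
  push_cast at h2
  simpa using h2

lemma ortho (n s : ℕ) (hs1 : 1 ≤ s) (hsn : s ≤ n) :
    ∑ t ∈ Finset.Icc s n,
      ((-1 : RatFunc ℂ))^(t - s) * (((t-1).choose (s-1) : ℕ) : RatFunc ℂ)
        * (((n-1).choose (t-1) : ℕ) : RatFunc ℂ)
      = if s = n then 1 else 0 := by
  have hre : ∀ t ∈ Finset.Icc s n,
      ((-1 : RatFunc ℂ))^(t - s) * (((t-1).choose (s-1) : ℕ) : RatFunc ℂ)
        * (((n-1).choose (t-1) : ℕ) : RatFunc ℂ)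
      = (((n-1).choose (s-1) : ℕ) : RatFunc ℂ)
        * (((-1 : RatFunc ℂ))^(t-s) * (((n-s).choose (t-s) : ℕ) : RatFunc ℂ)) := by
    intro t ht
    obtain ⟨hts, htn⟩ := Finset.mem_Icc.mp ht
    have hmul := Nat.choose_mul (n := n-1) (k := t-1) (s := s-1) (by omega)
    have he1 : (n-1) - (s-1) = n - s := by omega
    have he2 : (t-1) - (s-1) = t - s := by omega
    rw [he1, he2] at hmul
    have := congrArg (fun z : ℕ => (z : RatFunc ℂ)) hmul
    push_cast at this
    calc ((-1 : RatFunc ℂ))^(t - s) * (((t-1).choose (s-1) : ℕ) : RatFunc ℂ)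
        * (((n-1).choose (t-1) : ℕ) : RatFunc ℂ)
        = ((-1 : RatFunc ℂ))^(t - s) * ((((n-1).choose (t-1) : ℕ) : RatFunc ℂ)
            * (((t-1).choose (s-1) : ℕ) : RatFunc ℂ)) := by ring
      _ = ((-1 : RatFunc ℂ))^(t - s) * ((((n-1).choose (s-1) : ℕ) : RatFunc ℂ)
            * (((n-s).choose (t-s) : ℕ) : RatFunc ℂ)) := by rw [this]
      _ = _ := by ring
  rw [Finset.sum_congr rfl hre, ← Finset.mul_sum]
  have hreindex : ∑ t ∈ Finset.Icc s n,
      ((-1 : RatFunc ℂ))^(t-s) * (((n-s).choose (t-s) : ℕ) : RatFunc ℂ)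
      = ∑ j ∈ Finset.range ((n-s)+1),
          ((-1 : RatFunc ℂ))^j * (((n-s).choose j : ℕ) : RatFunc ℂ) := by
    apply Finset.sum_nbij' (fun t => t - s) (fun j => j + s)
    · intro t ht; obtain ⟨h1, h2⟩ := Finset.mem_Icc.mp ht
      exact Finset.mem_range.mpr (by omega)
    · intro j hj; have := Finset.mem_range.mp hj
      exact Finset.mem_Icc.mpr (by omega)
    · intro t ht; obtain ⟨h1, h2⟩ := Finset.mem_Icc.mp ht; omega
    · intro j hj; omega
    · intro t ht; obtain ⟨h1, h2⟩ := Finset.mem_Icc.mp ht; rfl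
  rw [hreindex, alt_sum_K]
  by_cases h : s = n
  · subst h; simp [Nat.choose_self]
  · rw [if_neg (by omega), if_neg h, mul_zero]

def etaC (t s : ℕ) : RatFunc ℂ :=
  if s = 0 then 0 else ((-1 : RatFunc ℂ))^(t - s) * (((t-1).choose (s-1) : ℕ) : RatFunc ℂ)

lemma eta_step (t : ℕ) :
    coeff (R := RatFunc ℂ) t ((1 + X) * DS N) = ∑ s ∈ Finset.range (t+1), etaC t s * gamq N s := by
  match t with
  | 0 =>
    have h0 : coeff (R := RatFunc ℂ) 0 ((1 + X) * DS N) = delq N 0 := by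
      rw [add_mul, one_mul, map_add]
      simp [coeff_zero_eq_constantCoeff, DS, constantCoeff_mk]
    rw [h0, delq_zero]
    simp [etaC]
  | (r+1) =>
    have hsplit : coeff (R := RatFunc ℂ) (r+1) ((1 + X) * DS N) = delq N (r+1) + delq N r := by
      rw [add_mul, one_mul, map_add, coeff_succ_X_mul]
      rw [DS, coeff_mk, coeff_mk]
    rw [hsplit, delq_sum, delq_sum]
    have hext : ∑ s ∈ Finset.range (r+2),
            (if s ≤ r then ((-1 : RatFunc ℂ))^(r - s) * ((r.choose s : ℕ) : RatFunc ℂ) else 0)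
              * gamq N s
        = ∑ s ∈ Finset.range (r+1),
            ((-1 : RatFunc ℂ))^(r - s) * ((r.choose s : ℕ) : RatFunc ℂ) * gamq N s := by
      rw [Finset.sum_range_succ, if_neg (show ¬ (r+1 ≤ r) by omega), zero_mul, add_zero]
      apply Finset.sum_congr rfl
      intro s hs
      rw [if_pos (show s ≤ r by have := Finset.mem_range.mp hs; omega)]
    rw [← hext, ← Finset.sum_add_distrib]
    apply Finset.sum_congr rfl
    intro s hs
    rw [← add_mul]
    congr 1
    rcases Nat.eq_zero_or_pos s with hs0 | hs0
    · subst hs0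
      rw [if_pos (Nat.zero_le r), etaC, if_pos rfl]
      simp only [Nat.sub_zero, Nat.choose_zero_right, Nat.cast_one, mul_one]
      rw [pow_succ]
      ring
    · obtain ⟨s', rfl⟩ : ∃ s', s = s' + 1 := ⟨s - 1, by omega⟩
      have hsr : s' + 1 ≤ r + 1 := by have := Finset.mem_range.mp hs; omega
      by_cases hstop : s' + 1 ≤ r
      · rw [if_pos hstop, etaC, if_neg (Nat.succ_ne_zero s')]
        simp only [Nat.add_sub_cancel]
        have hch : (r+1).choose (s'+1) = r.choose s' + r.choose (s'+1) :=
          Nat.choose_succ_succ r s'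
        have he1 : r + 1 - (s'+1) = (r - (s'+1)) + 1 := by omega
        have he2 : r - (s'+1) + 1 = r - s' := by omega
        rw [hch, he1, he2]
        have he3 : r - s' = (r - (s'+1)) + 1 := by omega
        rw [he3, pow_succ]
        push_cast
        ring
      · rw [if_neg hstop, etaC, if_neg (Nat.succ_ne_zero s')]
        have : s' = r := by omega
        subst this
        simp [Nat.choose_self, Nat.sub_self]

lemma SubS_D : SubS ((1 + X) * DS N) = LS N := by
  ext n
  rw [coeff_SubS, LS, coeff_mk]
  have hstep : ∀ t ∈ Finset.range (n+1),
      coeff (R := RatFunc ℂ) t ((1 + X) * DS N) * kap n t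
      = ∑ s ∈ Finset.range (t+1), etaC t s * gamq N s * kap n t := by
    intro t _
    rw [eta_step, Finset.sum_mul]
  rw [Finset.sum_congr rfl hstep]
  rw [Finset.sum_comm' (s' := fun s => Finset.Icc s n) (t' := Finset.range (n+1))
    (by
      intro t s
      simp only [Finset.mem_range, Finset.mem_Icc]
      omega)]
  rcases Nat.eq_zero_or_pos n with hn0 | hn0
  · subst hn0
    simp [etaC, gamq_zero]
  have hinner : ∀ s ∈ Finset.range (n+1),
      ∑ t ∈ Finset.Icc s n, etaC t s * gamq N s * kap n t
        = gamq N s * (if s = n ∧ 1 ≤ s then 1 else 0) := by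
    intro s hs
    rcases Nat.eq_zero_or_pos s with hs0 | hs0
    · subst hs0
      simp [etaC]
    have hsn : s ≤ n := by have := Finset.mem_range.mp hs; omega
    have hterm : ∀ t ∈ Finset.Icc s n,
        etaC t s * gamq N s * kap n t
          = gamq N s * (((-1 : RatFunc ℂ))^(t - s) * (((t-1).choose (s-1) : ℕ) : RatFunc ℂ)
              * (((n-1).choose (t-1) : ℕ) : RatFunc ℂ)) := by
      intro t ht
      obtain ⟨h1, h2⟩ := Finset.mem_Icc.mp ht
      rw [etaC, if_neg (by omega), kap_ge_one (show 1 ≤ t by omega), if_pos h2]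
      ring
    rw [Finset.sum_congr rfl hterm, ← Finset.mul_sum, ortho n s hs0 hsn]
    congr 1
    by_cases h : s = n
    · rw [if_pos h, if_pos ⟨h, hs0⟩]
    · rw [if_neg h, if_neg (by tauto)]
  rw [Finset.sum_congr rfl hinner]
  rw [Finset.sum_eq_single n]
  · rw [if_pos ⟨rfl, hn0⟩, mul_one]
  · intro s _ hsne
    rw [if_neg (by tauto), mul_zero]
  · intro h
    exact absurd (Finset.self_mem_range_succ n) h

lemma ode_z : Th (GS N) = GS N * LS N := by
  rw [GS, Th_SubS, ode_u]
  have h1 : (1 + X) * (PhiS N * DS N) = PhiS N * ((1 + X) * DS N) := by ring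
  rw [h1, SubS_mul, SubS_D]

/-! ### the multiplier identity -/

def Aser : PowerSeries (RatFunc ℂ) := 1 - C (R := RatFunc ℂ) (aQ) * X
def Bser : PowerSeries (RatFunc ℂ) := 1 - C (R := RatFunc ℂ) (bQ N) * X
def Cser : PowerSeries (RatFunc ℂ) := 1 - C (R := RatFunc ℂ) 1 * X
def Dser : PowerSeries (RatFunc ℂ) := 1 - C (R := RatFunc ℂ) (pQ N) * X

lemma ab_eq (hN : 1 ≤ N) : aQ * bQ N = pQ N := by
  rw [aQ, bQ, pQ, ← pow_add]
  congr 1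
  omega

lemma rescale_LS (hN : 1 ≤ N) :
    rescale (pQ N) (LS N) - LS N
      = X * Sgeo 1 + C (R := RatFunc ℂ) (pQ N) * X * Sgeo (pQ N)
        - C (R := RatFunc ℂ) aQ * X * Sgeo aQ - C (R := RatFunc ℂ) (bQ N) * X * Sgeo (bQ N) := by
  ext n
  rw [map_sub, map_sub, map_sub, map_add, coeff_rescale]
  have hXS : ∀ (c : RatFunc ℂ) (k : ℕ), coeff (R := RatFunc ℂ) k (C (R := RatFunc ℂ) c * X * Sgeo c)
      = c * coeff (R := RatFunc ℂ) k (X * Sgeo c) := by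
    intro c k
    rw [mul_assoc, coeff_C_mul]
  cases n with
  | zero =>
    simp only [LS, coeff_mk, pow_zero, one_mul, hXS]
    rw [gamq_zero]
    have hz : ∀ c : RatFunc ℂ, coeff (R := RatFunc ℂ) 0 (X * Sgeo c) = 0 := by
      intro c
      rw [coeff_zero_eq_constantCoeff, map_mul, constantCoeff_X, zero_mul]
    rw [hz, hz, hz, hz]
    ring
  | succ m =>
    simp only [LS, coeff_mk, hXS]
    have hc : ∀ c : RatFunc ℂ, coeff (R := RatFunc ℂ) (m+1) (X * Sgeo c) = c ^ m := by
      intro c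
      rw [coeff_succ_X_mul, coeff_Sgeo]
    rw [hc, hc, hc, hc]
    have hk := key_gamq N hN (m+1)
    have hab : aQ^(m+1) * bQ N^(m+1) = pQ N^(m+1) := by rw [← mul_pow, ab_eq N hN]
    have hps : pQ N ^ (m+1) = pQ N * pQ N ^ m := by rw [pow_succ]; ring
    have has : aQ ^ (m+1) = aQ * aQ ^ m := by rw [pow_succ]; ring
    have hbs : bQ N ^ (m+1) = bQ N * bQ N ^ m := by rw [pow_succ]; ring
    linear_combination hk + hab - gamq N (m+1) * hps
      + (1 - bQ N ^ (m+1)) * has + hbs - aQ ^ m * aQ * hbs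

/-! ### the functional equation -/

lemma constGS : constantCoeff (R := RatFunc ℂ) (GS N) = 1 := by
  rw [← coeff_zero_eq_constantCoeff, GS, coeff_SubS]
  rw [Finset.sum_range_one]
  rw [kap_zero]
  simp [PhiS, fh_zero]

lemma Yeq (hN : 1 ≤ N) :
    rescale (pQ N) (GS N) * (Cser * Dser N) = GS N * (Aser * Bser N) := by
  have h1 : Cser * Sgeo 1 = 1 := one_sub_mul_Sgeo 1
  have hp : Dser N * Sgeo (pQ N) = 1 := one_sub_mul_Sgeo (pQ N)
  have ha : Aser * Sgeo aQ = 1 := one_sub_mul_Sgeo aQ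
  have hb : Bser N * Sgeo (bQ N) = 1 := one_sub_mul_Sgeo (bQ N)
  have hrL : rescale (pQ N) (LS N)
      = LS N + (X * Sgeo 1 + C (R := RatFunc ℂ) (pQ N) * X * Sgeo (pQ N)
        - C (R := RatFunc ℂ) aQ * X * Sgeo aQ - C (R := RatFunc ℂ) (bQ N) * X * Sgeo (bQ N)) := by
    have := rescale_LS N hN
    linear_combination this
  apply ode_unique (W := Aser * Bser N * Cser * Dser N)
    (R := Aser * Bser N * (rescale (pQ N) (LS N) * (Cser * Dser N) + Th (Cser * Dser N)))
  · simp [Aser, Bser, Cser, Dser]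
  · have hL0 : constantCoeff (R := RatFunc ℂ) (LS N) = 0 := by
      rw [← coeff_zero_eq_constantCoeff, LS, coeff_mk, gamq_zero]
    have hrL0 : constantCoeff (R := RatFunc ℂ) (rescale (pQ N) (LS N)) = 0 := by
      rw [← coeff_zero_eq_constantCoeff, coeff_rescale, pow_zero, one_mul,
        coeff_zero_eq_constantCoeff, hL0]
    have hT0 : constantCoeff (R := RatFunc ℂ) (Th (Cser * Dser N)) = 0 := by
      rw [← coeff_zero_eq_constantCoeff, coeff_Th]
      simp
    simp only [map_mul, map_add, hrL0, hT0, zero_mul, add_zero, mul_zero, zero_add]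
  · have hconst : constantCoeff (R := RatFunc ℂ) (rescale (pQ N) (GS N))
        = constantCoeff (R := RatFunc ℂ) (GS N) := by
      rw [← coeff_zero_eq_constantCoeff, coeff_rescale, pow_zero, one_mul,
        coeff_zero_eq_constantCoeff]
    simp [coeff_zero_eq_constantCoeff, map_mul, hconst, Aser, Bser, Cser, Dser]
  · -- W * Th Y₁ = Y₁ * R
    rw [Th_mul, Th_rescale, ode_z, map_mul]
    ring
  · -- W * Th Y₂ = Y₂ * R
    rw [Th_mul, ode_z]
    have hTAB : Th (Aser * Bser N) = Th Aser * Bser N + Aser * Th (Bser N) := Th_mul _ _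
    have hTCD : Th (Cser * Dser N) = Th Cser * Dser N + Cser * Th (Dser N) := Th_mul _ _
    have hTA : Th Aser = -(C (R := RatFunc ℂ) aQ * X) := Th_one_sub_mul aQ
    have hTB : Th (Bser N) = -(C (R := RatFunc ℂ) (bQ N) * X) := Th_one_sub_mul (bQ N)
    have hTC : Th Cser = -(C (R := RatFunc ℂ) 1 * X) := Th_one_sub_mul 1
    have hTD : Th (Dser N) = -(C (R := RatFunc ℂ) (pQ N) * X) := Th_one_sub_mul (pQ N)
    rw [hTAB, hTCD, hTA, hTB, hTC, hTD, hrL, map_one]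
    linear_combination (GS N) * (Aser * Bser N) *
      ((C (R := RatFunc ℂ) aQ * X * Bser N * Cser * Dser N) * ha
      + (C (R := RatFunc ℂ) (bQ N) * X * Aser * Cser * Dser N) * hb
      - (X * Aser * Bser N * Dser N) * h1
      - (C (R := RatFunc ℂ) (pQ N) * X * Aser * Bser N * Cser) * hp)

/-! ### identification with `fqSeries` -/

lemma coeff_stmt (n j : ℕ) :
    coeff (R := RatFunc ℂ) n (X^(j+1) * ((1 - X : PowerSeries (RatFunc ℂ))⁻¹)^(j+1))
      = kap n (j+1) := by
  rw [one_sub_X_inv, ← mul_pow]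
  rfl

lemma coeff0_fq (f : {r : ℕ // 1 ≤ r} → RatFunc ℂ) :
    coeff (R := RatFunc ℂ) 0 (fqSeries f) = 1 := by
  simp [fqSeries, coeff_mk]

lemma fq_coeff (f : {r : ℕ // 1 ≤ r} → RatFunc ℂ) (n : ℕ) :
    coeff (R := RatFunc ℂ) n (fqSeries f)
      = (if n = 0 then 1 else 0)
        + ∑ j ∈ Finset.range n, f ⟨j + 1, Nat.succ_le_succ (Nat.zero_le j)⟩ * kap n (j+1) := by
  rw [fqSeries, coeff_mk]
  congr 1
  apply Finset.sum_congr rfl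
  intro j _
  rw [coeff_stmt]

lemma fqS_eq : fqSeries (fun r => fh N r.1) = GS N := by
  ext n
  rw [fq_coeff, GS, coeff_SubS,
    Finset.sum_range_succ' (fun r => coeff (R := RatFunc ℂ) r (PhiS N) * kap n r) n]
  simp only [PhiS, coeff_mk]
  rw [fh_zero, one_mul, kap_zero, add_comm]

/-! ### regularity -/

lemma reg_zero : RegularAtOne 0 := ⟨0, 1, by simp⟩

lemma fh_reg (hN : 1 ≤ N) :
    ∀ n, ∃ ρ, RegularAtOne ρ ∧ fh N n = ((q) - 1)^n * ρ := by
  intro n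
  induction n using Nat.strong_induction_on with
  | _ n ih =>
    match n with
    | 0 => exact ⟨1, reg_one, by rw [fh_zero]; simp⟩
    | (m+1) =>
      have H : ∀ k, ∃ ρ, RegularAtOne ρ ∧
          (k < m+1 → fh N k * delq N ((m+1)-k) = ((q) - 1)^(m+1) * ρ) := by
        intro k
        by_cases hk : k < m+1
        · obtain ⟨ρ1, hρ1, he1⟩ := ih k hk
          obtain ⟨ρ2, hρ2, he2⟩ := delq_reg N ((m+1)-k) hN
          refine ⟨ρ1 * ρ2, reg_mul hρ1 hρ2, fun _ => ?_⟩
          rw [he1, he2]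
          have hkk : k + ((m+1)-k) = m+1 := by omega
          calc ((q) - 1)^k * ρ1 * (((q) - 1)^((m+1)-k) * ρ2)
              = ((q) - 1)^(k + ((m+1)-k)) * (ρ1 * ρ2) := by rw [pow_add]; ring
          _ = ((q) - 1)^(m+1) * (ρ1 * ρ2) := by rw [hkk]
        · exact ⟨0, reg_zero, fun h => absurd h hk⟩
      choose ρf hρreg hρval using H
      refine ⟨(((m+1 : ℕ) : RatFunc ℂ))⁻¹ * ∑ k ∈ Finset.range (m+1), ρf k,
        reg_mul (reg_natInv (m+1) (by omega)) (reg_sum fun k _ => hρreg k), ?_⟩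
      rw [fh_succ]
      have hsum : ∑ k ∈ Finset.range (m+1), fh N k * delq N ((m+1)-k)
          = ((q) - 1)^(m+1) * ∑ k ∈ Finset.range (m+1), ρf k := by
        rw [Finset.mul_sum]
        apply Finset.sum_congr rfl
        intro k hk
        exact hρval k (Finset.mem_range.mp hk)
      rw [hsum]
      ring

/-! ### uniqueness -/

lemma pQ_pow_ne_one (hN : 1 ≤ N) {n : ℕ} (hn : 1 ≤ n) : pQ N ^ n ≠ 1 := by
  have h : pQ N ^ n = (q) ^ (2*N*n) := by rw [pQ, ← pow_mul]
  rw [h]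
  exact q_pow_ne_one (by positivity)

lemma Y_unique (hN : 1 ≤ N) {F1 F2 : PowerSeries (RatFunc ℂ)}
    (h1 : rescale (pQ N) F1 * (Cser * Dser N) = F1 * (Aser * Bser N))
    (h2 : rescale (pQ N) F2 * (Cser * Dser N) = F2 * (Aser * Bser N))
    (h0 : coeff (R := RatFunc ℂ) 0 F1 = coeff (R := RatFunc ℂ) 0 F2) : F1 = F2 := by
  have hE : rescale (pQ N) (F1 - F2) * (Cser * Dser N) = (F1 - F2) * (Aser * Bser N) := by
    rw [map_sub, sub_mul, sub_mul, h1, h2]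
  have hCD0 : constantCoeff (R := RatFunc ℂ) (Cser * Dser N) = 1 := by simp [Cser, Dser]
  have hAB0 : constantCoeff (R := RatFunc ℂ) (Aser * Bser N) = 1 := by simp [Aser, Bser]
  ext n
  induction n using Nat.strong_induction_on with
  | _ n ih =>
    match n with
    | 0 => exact h0
    | (m+1) =>
      have hEc : ∀ k < m + 1, coeff (R := RatFunc ℂ) k (F1 - F2) = 0 := by
        intro k hk
        rw [map_sub, ih k hk, sub_self]
      have hL : coeff (R := RatFunc ℂ) (m+1) (rescale (pQ N) (F1 - F2) * (Cser * Dser N))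
          = pQ N ^ (m+1) * coeff (R := RatFunc ℂ) (m+1) (F1 - F2) := by
        rw [coeff_mul, Finset.sum_eq_single (m+1, 0)]
        · rw [coeff_rescale, coeff_zero_eq_constantCoeff, hCD0, mul_one]
        · rintro ⟨i, j⟩ hij hne
          have hijs : i + j = m + 1 := Finset.HasAntidiagonal.mem_antidiagonal.mp hij
          have h2' : i < m + 1 := by
            rcases Nat.lt_or_ge i (m+1) with h | h
            · exact h
            · exfalso; apply hne
              have hi : i = m + 1 := by omega
              have hj : j = 0 := by omega
              simp [hi, hj]
          rw [coeff_rescale, hEc i h2', mul_zero, zero_mul]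
        · intro h; exact absurd (Finset.HasAntidiagonal.mem_antidiagonal.mpr (by simp)) h
      have hR : coeff (R := RatFunc ℂ) (m+1) ((F1 - F2) * (Aser * Bser N))
          = coeff (R := RatFunc ℂ) (m+1) (F1 - F2) := by
        rw [coeff_mul, Finset.sum_eq_single (m+1, 0)]
        · rw [coeff_zero_eq_constantCoeff, hAB0, mul_one]
        · rintro ⟨i, j⟩ hij hne
          have hijs : i + j = m + 1 := Finset.HasAntidiagonal.mem_antidiagonal.mp hij
          have h2' : i < m + 1 := by
            rcases Nat.lt_or_ge i (m+1) with h | h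
            · exact h
            · exfalso; apply hne
              have hi : i = m + 1 := by omega
              have hj : j = 0 := by omega
              simp [hi, hj]
          rw [hEc i h2', zero_mul]
        · intro h; exact absurd (Finset.HasAntidiagonal.mem_antidiagonal.mpr (by simp)) h
      have hco := congrArg (coeff (R := RatFunc ℂ) (m+1)) hE
      rw [hL, hR] at hco
      have hfac : (pQ N ^ (m+1) - 1) * coeff (R := RatFunc ℂ) (m+1) (F1 - F2) = 0 := by
        rw [sub_mul, one_mul, hco, sub_self]
      have hne : pQ N ^ (m+1) - 1 ≠ 0 := by
        intro h
        exact pQ_pow_ne_one N hN (n := m+1) (by omega) (by linear_combination h)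
      have hz := (mul_eq_zero.mp hfac).resolve_left hne
      rw [map_sub] at hz
      exact sub_eq_zero.mp hz

lemma f_determined {f g : {r : ℕ // 1 ≤ r} → RatFunc ℂ}
    (h : fqSeries f = fqSeries g) : f = g := by
  have key : ∀ n (hn : 1 ≤ n), f ⟨n, hn⟩ = g ⟨n, hn⟩ := by
    intro n
    induction n using Nat.strong_induction_on with
    | _ n ih =>
      intro hn
      obtain ⟨m, rfl⟩ : ∃ m, n = m + 1 := ⟨n - 1, by omega⟩
      have hc := congrArg (coeff (R := RatFunc ℂ) (m+1)) h
      rw [fq_coeff, fq_coeff, Finset.sum_range_succ, Finset.sum_range_succ] at hc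
      have hs : ∑ j ∈ Finset.range m, f ⟨j + 1, Nat.succ_le_succ (Nat.zero_le j)⟩ * kap (m+1) (j+1)
          = ∑ j ∈ Finset.range m, g ⟨j + 1, Nat.succ_le_succ (Nat.zero_le j)⟩ * kap (m+1) (j+1) := by
        apply Finset.sum_congr rfl
        intro j hj
        have := ih (j+1) (by have := Finset.mem_range.mp hj; omega) (by omega)
        rw [this]
      rw [hs, kap_self, mul_one, mul_one] at hc
      exact add_left_cancel (add_left_cancel hc)
  funext r
  obtain ⟨n, hn⟩ := r
  exact key n hn


/-! ### bridges between the two forms of the functional equation -/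

lemma constC_ne : constantCoeff (R := RatFunc ℂ) (1 - X : PowerSeries (RatFunc ℂ)) ≠ 0 := by simp

lemma constD_ne : constantCoeff (R := RatFunc ℂ) (Dser N) ≠ 0 := by simp [Dser]

lemma eq_of_Y {F : PowerSeries (RatFunc ℂ)}
    (hY : rescale (pQ N) F * (Cser * Dser N) = F * (Aser * Bser N)) :
    rescale (pQ N) F = F * Aser * Bser N
      * ((1 - X : PowerSeries (RatFunc ℂ))⁻¹) * ((Dser N)⁻¹) := by
  have h1 : (1 - X : PowerSeries (RatFunc ℂ)) * (1 - X : PowerSeries (RatFunc ℂ))⁻¹ = 1 :=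
    PowerSeries.mul_inv_cancel _ constC_ne
  have h2 : Dser N * (Dser N)⁻¹ = 1 := PowerSeries.mul_inv_cancel _ (constD_ne N)
  have hCeq : Cser = (1 - X : PowerSeries (RatFunc ℂ)) := one_sub_X_eq.symm
  calc rescale (pQ N) F
      = rescale (pQ N) F * (((1 - X : PowerSeries (RatFunc ℂ))
          * (1 - X : PowerSeries (RatFunc ℂ))⁻¹) * (Dser N * (Dser N)⁻¹)) := by
        rw [h1, h2]; ring
    _ = (rescale (pQ N) F * (Cser * Dser N))
          * ((1 - X : PowerSeries (RatFunc ℂ))⁻¹ * (Dser N)⁻¹) := by rw [hCeq]; ring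
    _ = (F * (Aser * Bser N)) * ((1 - X : PowerSeries (RatFunc ℂ))⁻¹ * (Dser N)⁻¹) := by rw [hY]
    _ = _ := by ring

lemma Y_of_eq {F : PowerSeries (RatFunc ℂ)}
    (h : rescale (pQ N) F = F * Aser * Bser N
      * ((1 - X : PowerSeries (RatFunc ℂ))⁻¹) * ((Dser N)⁻¹)) :
    rescale (pQ N) F * (Cser * Dser N) = F * (Aser * Bser N) := by
  have h1 : (1 - X : PowerSeries (RatFunc ℂ))⁻¹ * (1 - X : PowerSeries (RatFunc ℂ)) = 1 :=
    PowerSeries.inv_mul_cancel _ constC_ne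
  have h2 : (Dser N)⁻¹ * Dser N = 1 := PowerSeries.inv_mul_cancel _ (constD_ne N)
  have hCeq : Cser = (1 - X : PowerSeries (RatFunc ℂ)) := one_sub_X_eq.symm
  rw [h, hCeq]
  calc F * Aser * Bser N * (1 - X : PowerSeries (RatFunc ℂ))⁻¹ * (Dser N)⁻¹
        * ((1 - X : PowerSeries (RatFunc ℂ)) * Dser N)
      = F * (Aser * Bser N) * (((1 - X : PowerSeries (RatFunc ℂ))⁻¹
          * (1 - X : PowerSeries (RatFunc ℂ))) * ((Dser N)⁻¹ * Dser N)) := by ring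
    _ = F * (Aser * Bser N) := by rw [h1, h2]; ring

/-- there is a unique sequence `(f_r)_{r ≥ 1}` of rational functions
in `q` such that each `f_r (q − 1)^{-r}` is regular at `q = 1` and the series
`f_q(z) = 1 + ∑_{r ≥ 1} f_r z^r (1 − z)^{-r}` satisfies
`f_q(z q^{2N}) = f_q(z) (1 − zq²)(1 − zq^{2N−2})(1 − z)⁻¹(1 − zq^{2N})⁻¹`. -/
theorem statement14 (N : ℕ) (hN : 1 ≤ N) :
    ∃! f : {r : ℕ // 1 ≤ r} → RatFunc ℂ,
      (∀ r : {r : ℕ // 1 ≤ r},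
          RegularAtOne (f r * ((RatFunc.X - 1 : RatFunc ℂ) ^ (r : ℕ))⁻¹)) ∧
      PowerSeries.rescale ((RatFunc.X : RatFunc ℂ) ^ (2 * N)) (fqSeries f)
        = fqSeries f
            * (1 - PowerSeries.C (R := RatFunc ℂ) ((RatFunc.X : RatFunc ℂ) ^ 2) * PowerSeries.X)
            * (1 - PowerSeries.C (R := RatFunc ℂ) ((RatFunc.X : RatFunc ℂ) ^ (2 * N - 2))
                * PowerSeries.X)
            * ((1 - PowerSeries.X)⁻¹)
            * ((1 - PowerSeries.C (R := RatFunc ℂ) ((RatFunc.X : RatFunc ℂ) ^ (2 * N))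
                * PowerSeries.X)⁻¹) := by
  classical
  refine ⟨fun r => fh N r.1, ⟨?_, ?_⟩, ?_⟩
  · -- regularity
    intro r
    obtain ⟨ρ, hρ, he⟩ := fh_reg N hN r.1
    have hne : ((RatFunc.X : RatFunc ℂ) - 1) ^ (r : ℕ) ≠ 0 := pow_ne_zero _ q_sub_one_ne
    have heq : fh N r.1 * (((RatFunc.X : RatFunc ℂ) - 1) ^ (r : ℕ))⁻¹ = ρ := by
      rw [he]
      field_simp
    rw [heq]
    exact hρ
  · -- functional equation
    have h := eq_of_Y N (Yeq N hN)
    rw [fqS_eq]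
    exact h
  · -- uniqueness
    rintro f' ⟨-, heq'⟩
    apply f_determined
    rw [fqS_eq]
    apply Y_unique N hN
    · exact Y_of_eq N heq'
    · exact Y_of_eq N (eq_of_Y N (Yeq N hN))
    · rw [coeff0_fq, coeff_zero_eq_constantCoeff, constGS]

end

end QVA
end
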